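/- arXiv:2504.16962 — 3 statements merged into one kernel-verified Lean document; each statement's English description precedes it below -/
import Mathlib

section
/- Let $f : M \to \mathbb{R}$ be a Morse-Bott-Smale function on a closed manifold and $B$, $B'$ critical submanifolds with $\dim B = b$. If the intersection $W(B,B') = W^u(B) \cap W^s(B')$ is nonempty, then it is a submanifold of $M$ of dimension $\operatorname{ind} B - \operatorname{ind} B' + b$; in particular this dimension does not depend on $\dim B'$. -/
open scoped Manifold

/-!
STATEMENT 6: For a Morse--Bott--Smale function, if the intersection
`W(B,B') = W^u(B) ∩ W^s(B')` is nonempty then it is a submanifold of `M` of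
dimension `ind B - ind B' + dim B` (independent of `dim B'`).

Setup: the unstable manifold `W^u(B)` is (the image of) an injective smooth
immersed manifold `P₁` of dimension `dim B + ind B`, the stable manifold
`W^s(B')` is `P₂` of dimension `dim M - ind B'`, mapped to `M` by smooth
injective maps `σ₁`, `σ₂`; the Morse--Bott--Smale condition makes them
transverse.  The conclusion asserts that the intersection
`range σ₁ ∩ range σ₂ ⊆ M` (with the subspace topology) carries the structure
of a smooth manifold of dimension `ind B - ind B' + dim B`.
-/

/-- The canonical identification of the tangent space of a manifold modelled on
`ℝ^m` with `ℝ^m` itself. -/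
def tangentToE {m : ℕ} {X : Type*} [TopologicalSpace X]
    [ChartedSpace (EuclideanSpace ℝ (Fin m)) X] {x : X}
    (v : TangentSpace (𝓡 m) x) : EuclideanSpace ℝ (Fin m) := v

open Set Function Topology
set_option linter.unusedSectionVars false
set_option maxHeartbeats 1000000

noncomputable section TransverseIntersection

variable {d1 d2 m n : ℕ}
  {M : Type*} [TopologicalSpace M]
  [ChartedSpace (EuclideanSpace ℝ (Fin m)) M] [IsManifold (𝓡 m) (⊤ : ℕ∞) M]
  {P1 : Type*} [TopologicalSpace P1]
  [ChartedSpace (EuclideanSpace ℝ (Fin d1)) P1] [IsManifold (𝓡 d1) (⊤ : ℕ∞) P1]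
  {P2 : Type*} [TopologicalSpace P2]
  [ChartedSpace (EuclideanSpace ℝ (Fin d2)) P2] [IsManifold (𝓡 d2) (⊤ : ℕ∞) P2]

/-- Bundle of hypotheses. -/
structure THyp (σ1 : P1 → M) (σ2 : P2 → M) (d1 d2 m n : ℕ)
    [ChartedSpace (EuclideanSpace ℝ (Fin m)) M]
    [ChartedSpace (EuclideanSpace ℝ (Fin d1)) P1]
    [ChartedSpace (EuclideanSpace ℝ (Fin d2)) P2] : Prop where
  hdim : d1 + d2 = m + n
  hσ1 : ContMDiff (𝓡 d1) (𝓡 m) (⊤ : ℕ∞) σ1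
  hσ2 : ContMDiff (𝓡 d2) (𝓡 m) (⊤ : ℕ∞) σ2
  hinj1 : Function.Injective σ1
  hinj2 : Function.Injective σ2
  hemb1 : Topology.IsEmbedding σ1
  hemb2 : Topology.IsEmbedding σ2
  htrans : ∀ (x1 : P1) (x2 : P2), σ1 x1 = σ2 x2 →
      ∀ v : EuclideanSpace ℝ (Fin m),
        ∃ (u1 : EuclideanSpace ℝ (Fin d1)) (u2 : EuclideanSpace ℝ (Fin d2)),
          v = (show EuclideanSpace ℝ (Fin m) from mfderiv (𝓡 d1) (𝓡 m) σ1 x1 u1) +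
              (show EuclideanSpace ℝ (Fin m) from mfderiv (𝓡 d2) (𝓡 m) σ2 x2 u2)

/-- An intersection point datum. -/
structure TPt (σ1 : P1 → M) (σ2 : P2 → M) where
  x1 : P1
  x2 : P2
  heq : σ2 x2 = σ1 x1

variable {σ1 : P1 → M} {σ2 : P2 → M}

lemma oneLeInftyAux : (1 : WithTop ℕ∞) ≤ ((⊤ : ℕ∞) : WithTop ℕ∞) := by
  exact_mod_cast (le_top : (1 : ℕ∞) ≤ ⊤)

namespace TPt

variable (D : TPt σ1 σ2)

def c1 : OpenPartialHomeomorph P1 (EuclideanSpace ℝ (Fin d1)) := chartAt _ D.x1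
def c2 : OpenPartialHomeomorph P2 (EuclideanSpace ℝ (Fin d2)) := chartAt _ D.x2
def cM : OpenPartialHomeomorph M (EuclideanSpace ℝ (Fin m)) := chartAt _ (σ1 D.x1)

def f : EuclideanSpace ℝ (Fin d1) → EuclideanSpace ℝ (Fin m) :=
  fun w => D.cM (m := m) (σ1 ((D.c1 (d1 := d1)).symm w))
def g : EuclideanSpace ℝ (Fin d2) → EuclideanSpace ℝ (Fin m) :=
  fun w => D.cM (m := m) (σ2 ((D.c2 (d2 := d2)).symm w))
def h : EuclideanSpace ℝ (Fin d1) × EuclideanSpace ℝ (Fin d2) → EuclideanSpace ℝ (Fin m) :=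
  fun w => D.f (d1 := d1) (m := m) w.1 - D.g (d2 := d2) (m := m) w.2

def Ω1 : Set (EuclideanSpace ℝ (Fin d1)) :=
  (D.c1 (d1 := d1)).target ∩ (D.c1 (d1 := d1)).symm ⁻¹' (σ1 ⁻¹' (D.cM (m := m)).source)
def Ω2 : Set (EuclideanSpace ℝ (Fin d2)) :=
  (D.c2 (d2 := d2)).target ∩ (D.c2 (d2 := d2)).symm ⁻¹' (σ2 ⁻¹' (D.cM (m := m)).source)
def Ω : Set (EuclideanSpace ℝ (Fin d1) × EuclideanSpace ℝ (Fin d2)) :=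
  D.Ω1 (d1 := d1) (m := m) ×ˢ D.Ω2 (d2 := d2) (m := m)

def q0 : EuclideanSpace ℝ (Fin d1) × EuclideanSpace ℝ (Fin d2) :=
  (D.c1 (d1 := d1) D.x1, D.c2 (d2 := d2) D.x2)

lemma isOpen_Ω1 (H : THyp σ1 σ2 d1 d2 m n) : IsOpen (D.Ω1 (d1 := d1) (m := m)) :=
  (D.c1 (d1 := d1)).continuousOn_symm.isOpen_inter_preimage
    (D.c1 (d1 := d1)).open_target
    (((D.cM (m := m)).open_source).preimage H.hσ1.continuous)

lemma isOpen_Ω2 (H : THyp σ1 σ2 d1 d2 m n) : IsOpen (D.Ω2 (d2 := d2) (m := m)) :=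
  (D.c2 (d2 := d2)).continuousOn_symm.isOpen_inter_preimage
    (D.c2 (d2 := d2)).open_target
    (((D.cM (m := m)).open_source).preimage H.hσ2.continuous)

lemma isOpen_Ω (H : THyp σ1 σ2 d1 d2 m n) : IsOpen (D.Ω (d1 := d1) (d2 := d2) (m := m)) :=
  (D.isOpen_Ω1 H).prod (D.isOpen_Ω2 H)

lemma q0_mem_Ω : D.q0 (d1 := d1) (d2 := d2) ∈ D.Ω (d1 := d1) (d2 := d2) (m := m) := by
  have h1 : D.x1 ∈ (D.c1 (d1 := d1)).source := mem_chart_source _ _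
  have h2 : D.x2 ∈ (D.c2 (d2 := d2)).source := mem_chart_source _ _
  refine ⟨⟨(D.c1 (d1 := d1)).map_source h1, ?_⟩, ⟨(D.c2 (d2 := d2)).map_source h2, ?_⟩⟩
  · show (D.c1 (d1 := d1)).symm ((D.c1 (d1 := d1)) D.x1) ∈ σ1 ⁻¹' (D.cM (m := m)).source
    rw [(D.c1 (d1 := d1)).left_inv h1]
    show σ1 D.x1 ∈ (D.cM (m := m)).source
    exact mem_chart_source _ _
  · show (D.c2 (d2 := d2)).symm ((D.c2 (d2 := d2)) D.x2) ∈ σ2 ⁻¹' (D.cM (m := m)).source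
    rw [(D.c2 (d2 := d2)).left_inv h2]
    show σ2 D.x2 ∈ (D.cM (m := m)).source
    rw [D.heq]
    exact mem_chart_source _ _

variable (H : THyp σ1 σ2 d1 d2 m n)
include H

lemma contDiffOn_f : ContDiffOn ℝ (⊤ : ℕ∞) (D.f (d1 := d1) (m := m)) (D.Ω1 (d1 := d1) (m := m)) := by
  have hc1 : ContMDiffOn (𝓡 d1) (𝓡 d1) (⊤ : ℕ∞) (D.c1 (d1 := d1)).symm (D.c1 (d1 := d1)).target :=
    contMDiffOn_chart_symm
  have hcM : ContMDiffOn (𝓡 m) (𝓡 m) (⊤ : ℕ∞) (D.cM (m := m)) (D.cM (m := m)).source :=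
    contMDiffOn_chart
  have hcomp : ContMDiffOn (𝓡 d1) (𝓡 m) (⊤ : ℕ∞)
      ((D.cM (m := m)) ∘ (σ1 ∘ (D.c1 (d1 := d1)).symm)) (D.Ω1 (d1 := d1) (m := m)) := by
    refine hcM.comp ?_ (fun w hw => hw.2)
    exact H.hσ1.comp_contMDiffOn (hc1.mono inter_subset_left)
  exact contMDiffOn_iff_contDiffOn.mp hcomp

lemma contDiffOn_g : ContDiffOn ℝ (⊤ : ℕ∞) (D.g (d2 := d2) (m := m)) (D.Ω2 (d2 := d2) (m := m)) := by
  have hc2 : ContMDiffOn (𝓡 d2) (𝓡 d2) (⊤ : ℕ∞) (D.c2 (d2 := d2)).symm (D.c2 (d2 := d2)).target :=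
    contMDiffOn_chart_symm
  have hcM : ContMDiffOn (𝓡 m) (𝓡 m) (⊤ : ℕ∞) (D.cM (m := m)) (D.cM (m := m)).source :=
    contMDiffOn_chart
  have hcomp : ContMDiffOn (𝓡 d2) (𝓡 m) (⊤ : ℕ∞)
      ((D.cM (m := m)) ∘ (σ2 ∘ (D.c2 (d2 := d2)).symm)) (D.Ω2 (d2 := d2) (m := m)) := by
    refine hcM.comp ?_ (fun w hw => hw.2)
    exact H.hσ2.comp_contMDiffOn (hc2.mono inter_subset_left)
  exact contMDiffOn_iff_contDiffOn.mp hcomp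

lemma contDiffOn_h : ContDiffOn ℝ (⊤ : ℕ∞) (D.h (d1 := d1) (d2 := d2) (m := m))
    (D.Ω (d1 := d1) (d2 := d2) (m := m)) := by
  have h1 := (D.contDiffOn_f H).comp contDiff_fst.contDiffOn
    (fun w (hw : w ∈ D.Ω (d1 := d1) (d2 := d2) (m := m)) => hw.1)
  have h2 := (D.contDiffOn_g H).comp contDiff_snd.contDiffOn
    (fun w (hw : w ∈ D.Ω (d1 := d1) (d2 := d2) (m := m)) => hw.2)
  exact h1.sub h2

def DF : EuclideanSpace ℝ (Fin d1) →L[ℝ] EuclideanSpace ℝ (Fin m) :=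
  mfderiv (𝓡 d1) (𝓡 m) σ1 D.x1
def DG : EuclideanSpace ℝ (Fin d2) →L[ℝ] EuclideanSpace ℝ (Fin m) :=
  mfderiv (𝓡 d2) (𝓡 m) σ2 D.x2

lemma hasFDerivAt_f :
    HasFDerivAt (D.f (d1 := d1) (m := m)) (D.DF (d1 := d1) (m := m))
      (D.c1 (d1 := d1) D.x1) := by
  obtain ⟨x1, x2, heq⟩ := D
  have hmd : MDifferentiableAt (𝓡 d1) (𝓡 m) σ1 x1 := H.hσ1.mdifferentiableAt (ne_of_gt (lt_of_lt_of_le zero_lt_one oneLeInftyAux))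
  have hwrit : writtenInExtChartAt (𝓡 d1) (𝓡 m) x1 σ1 =
      TPt.f (m := m) (d1 := d1) ⟨x1, x2, heq⟩ := by
    funext w
    simp [writtenInExtChartAt, TPt.f, TPt.cM, TPt.c1, extChartAt_coe, extChartAt_coe_symm]
  have hdiff : DifferentiableAt ℝ (writtenInExtChartAt (𝓡 d1) (𝓡 m) x1 σ1)
      ((chartAt (EuclideanSpace ℝ (Fin d1)) x1) x1) := by
    have h2 := ((mdifferentiableAt_iff _ _).mp hmd).2
    rw [differentiableWithinAt_univ.symm]
    simpa [extChartAt_coe] using h2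
  have hDF : TPt.DF (m := m) (d1 := d1) ⟨x1, x2, heq⟩ =
      fderiv ℝ (writtenInExtChartAt (𝓡 d1) (𝓡 m) x1 σ1)
        ((chartAt (EuclideanSpace ℝ (Fin d1)) x1) x1) := by
    rw [TPt.DF, mfderiv]
    dsimp only
    simp only [hmd, ↓reduceIte]
    simp [extChartAt_coe, fderivWithin_univ]
  rw [← hwrit, hDF]
  exact hdiff.hasFDerivAt

lemma hasFDerivAt_g :
    HasFDerivAt (D.g (d2 := d2) (m := m)) (D.DG (d2 := d2) (m := m))
      (D.c2 (d2 := d2) D.x2) := by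
  obtain ⟨x1, x2, heq⟩ := D
  have hmd : MDifferentiableAt (𝓡 d2) (𝓡 m) σ2 x2 := H.hσ2.mdifferentiableAt (ne_of_gt (lt_of_lt_of_le zero_lt_one oneLeInftyAux))
  have hwrit : writtenInExtChartAt (𝓡 d2) (𝓡 m) x2 σ2 =
      TPt.g (m := m) (d2 := d2) ⟨x1, x2, heq⟩ := by
    funext w
    simp [writtenInExtChartAt, TPt.g, TPt.cM, TPt.c2, extChartAt_coe, extChartAt_coe_symm, heq]
  have hdiff : DifferentiableAt ℝ (writtenInExtChartAt (𝓡 d2) (𝓡 m) x2 σ2)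
      ((chartAt (EuclideanSpace ℝ (Fin d2)) x2) x2) := by
    have h2 := ((mdifferentiableAt_iff _ _).mp hmd).2
    rw [differentiableWithinAt_univ.symm]
    simpa [extChartAt_coe] using h2
  have hDG : TPt.DG (m := m) (d2 := d2) ⟨x1, x2, heq⟩ =
      fderiv ℝ (writtenInExtChartAt (𝓡 d2) (𝓡 m) x2 σ2)
        ((chartAt (EuclideanSpace ℝ (Fin d2)) x2) x2) := by
    rw [TPt.DG, mfderiv]
    dsimp only
    simp only [hmd, ↓reduceIte]
    simp [extChartAt_coe, fderivWithin_univ]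
  rw [← hwrit, hDG]
  exact hdiff.hasFDerivAt

def Dh : (EuclideanSpace ℝ (Fin d1) × EuclideanSpace ℝ (Fin d2)) →L[ℝ]
    EuclideanSpace ℝ (Fin m) :=
  (D.DF (d1 := d1) (m := m)).comp (.fst ℝ _ _) - (D.DG (d2 := d2) (m := m)).comp (.snd ℝ _ _)

lemma hasFDerivAt_h : HasFDerivAt (D.h (d1 := d1) (d2 := d2) (m := m))
    (D.Dh (d1 := d1) (d2 := d2) (m := m)) (D.q0 (d1 := d1) (d2 := d2)) := by
  have h1 := ((D.hasFDerivAt_f H).comp (D.q0 (d1 := d1) (d2 := d2)) (hasFDerivAt_fst (𝕜 := ℝ) (p := D.q0 (d1 := d1) (d2 := d2))))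
  have h2 := ((D.hasFDerivAt_g H).comp (D.q0 (d1 := d1) (d2 := d2)) (hasFDerivAt_snd (𝕜 := ℝ) (p := D.q0 (d1 := d1) (d2 := d2))))
  exact h1.sub h2

lemma Dh_surj : Function.Surjective (D.Dh (d1 := d1) (d2 := d2) (m := m)) := by
  intro v
  obtain ⟨u1, u2, hv⟩ := H.htrans D.x1 D.x2 D.heq.symm v
  refine ⟨(u1, -u2), ?_⟩
  simp only [Dh, ContinuousLinearMap.sub_apply, ContinuousLinearMap.coe_comp',
    Function.comp_apply, ContinuousLinearMap.coe_fst', ContinuousLinearMap.coe_snd',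
    map_neg, sub_neg_eq_add]
  exact hv.symm

lemma exists_A : ∃ A : (EuclideanSpace ℝ (Fin d1) × EuclideanSpace ℝ (Fin d2)) ≃L[ℝ]
    (EuclideanSpace ℝ (Fin m) × EuclideanSpace ℝ (Fin n)),
    ∀ w, (A w).1 = D.Dh (d1 := d1) (d2 := d2) (m := m) w := by
  classical
  set Dh := D.Dh (d1 := d1) (d2 := d2) (m := m) with hDh
  have hsurj : LinearMap.range (Dh : (EuclideanSpace ℝ (Fin d1) × EuclideanSpace ℝ (Fin d2))
      →ₗ[ℝ] EuclideanSpace ℝ (Fin m)) = ⊤ := by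
    rw [LinearMap.range_eq_top]
    exact D.Dh_surj H
  set K := LinearMap.ker (Dh : (EuclideanSpace ℝ (Fin d1) × EuclideanSpace ℝ (Fin d2))
      →ₗ[ℝ] EuclideanSpace ℝ (Fin m)) with hK
  have hrank : Module.finrank ℝ K = n := by
    have hrn := LinearMap.finrank_range_add_finrank_ker
      (Dh : (EuclideanSpace ℝ (Fin d1) × EuclideanSpace ℝ (Fin d2))
        →ₗ[ℝ] EuclideanSpace ℝ (Fin m))
    rw [hsurj, finrank_top] at hrn
    simp only [Module.finrank_prod, finrank_euclideanSpace_fin] at hrn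
    have hdim := H.hdim
    rw [hK]
    omega
  obtain ⟨C, hC⟩ := Submodule.exists_isCompl K
  set proj := K.linearProjOfIsCompl C hC with hproj
  have hrankn : Module.finrank ℝ K = Module.finrank ℝ (EuclideanSpace ℝ (Fin n)) := by
    rw [hrank, finrank_euclideanSpace_fin]
  set ℓ : K ≃ₗ[ℝ] EuclideanSpace ℝ (Fin n) := LinearEquiv.ofFinrankEq _ _ hrankn with hℓ
  set L : (EuclideanSpace ℝ (Fin d1) × EuclideanSpace ℝ (Fin d2)) →ₗ[ℝ]
      EuclideanSpace ℝ (Fin n) := ℓ.toLinearMap.comp proj with hL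
  set T : (EuclideanSpace ℝ (Fin d1) × EuclideanSpace ℝ (Fin d2)) →ₗ[ℝ]
      (EuclideanSpace ℝ (Fin m) × EuclideanSpace ℝ (Fin n)) :=
    LinearMap.prod (Dh : _ →ₗ[ℝ] _) L with hT
  have hinj : Function.Injective T := by
    intro w w' hww'
    have h1 : Dh w = Dh w' := congrArg Prod.fst hww'
    have h2 : L w = L w' := congrArg Prod.snd hww'
    have hker : w - w' ∈ K := by
      simp only [hK, LinearMap.mem_ker, ContinuousLinearMap.coe_coe, map_sub]
      rw [sub_eq_zero]
      exact h1
    have hproj1 : proj (w - w') = ⟨w - w', hker⟩ :=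
      Submodule.linearProjOfIsCompl_apply_left hC ⟨w - w', hker⟩
    have hL0 : L (w - w') = 0 := by
      simp only [hL, LinearMap.coe_comp, Function.comp_apply, map_sub]
      rw [sub_eq_zero]
      exact h2
    have : (⟨w - w', hker⟩ : K) = 0 := by
      apply ℓ.injective
      rw [map_zero, ← hproj1]
      simpa [hL] using hL0
    have := congrArg (Subtype.val) this
    simpa [sub_eq_zero] using this
  have hfr : Module.finrank ℝ (EuclideanSpace ℝ (Fin d1) × EuclideanSpace ℝ (Fin d2)) =
      Module.finrank ℝ (EuclideanSpace ℝ (Fin m) × EuclideanSpace ℝ (Fin n)) := by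
    have hdim := H.hdim
    simp [Module.finrank_prod, finrank_euclideanSpace_fin]
    omega
  have hTsurj : Function.Surjective T :=
    (LinearMap.injective_iff_surjective_of_finrank_eq_finrank hfr).mp hinj
  set e := LinearEquiv.ofBijective T ⟨hinj, hTsurj⟩ with he
  refine ⟨e.toContinuousLinearEquiv, fun w => ?_⟩
  have : e.toContinuousLinearEquiv w = e w := by
    rw [← LinearEquiv.coe_toContinuousLinearEquiv' e]
  rw [this]
  rfl

def A : (EuclideanSpace ℝ (Fin d1) × EuclideanSpace ℝ (Fin d2)) ≃L[ℝ]
    (EuclideanSpace ℝ (Fin m) × EuclideanSpace ℝ (Fin n)) := (D.exists_A H).choose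

lemma A_fst : ∀ w, (D.A H w).1 = D.Dh (d1 := d1) (d2 := d2) (m := m) w :=
  (D.exists_A H).choose_spec

def Acl : (EuclideanSpace ℝ (Fin d1) × EuclideanSpace ℝ (Fin d2)) →L[ℝ]
    (EuclideanSpace ℝ (Fin m) × EuclideanSpace ℝ (Fin n)) := D.A H

def Asymcl : (EuclideanSpace ℝ (Fin m) × EuclideanSpace ℝ (Fin n)) →L[ℝ]
    (EuclideanSpace ℝ (Fin d1) × EuclideanSpace ℝ (Fin d2)) := (D.A H).symm

def Φ : (EuclideanSpace ℝ (Fin d1) × EuclideanSpace ℝ (Fin d2)) →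
    (EuclideanSpace ℝ (Fin m) × EuclideanSpace ℝ (Fin n)) :=
  fun w => (D.h (d1 := d1) (d2 := d2) (m := m) w, (D.A H w).2)

lemma contDiffOn_Φ : ContDiffOn ℝ (⊤ : ℕ∞) (D.Φ H) (D.Ω (d1 := d1) (d2 := d2) (m := m)) := by
  have h2 : ContDiff ℝ (⊤ : ℕ∞) (fun w => (D.A H w).2) := by
    have hA : ContDiff ℝ (⊤ : ℕ∞) (fun w => D.A H w) := by
      have := (D.Acl H).contDiff (n := (⊤ : ℕ∞))
      exact this
    exact contDiff_snd.comp hA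
  exact (D.contDiffOn_h H).prodMk h2.contDiffOn

lemma hasFDerivAt_Φ_q0 : HasFDerivAt (D.Φ H) (D.Acl H)
    (D.q0 (d1 := d1) (d2 := d2)) := by
  have hA2 : HasFDerivAt (fun w => (D.A H w).2)
      ((ContinuousLinearMap.snd ℝ (EuclideanSpace ℝ (Fin m)) (EuclideanSpace ℝ (Fin n))).comp
        (D.Acl H))
      (D.q0 (d1 := d1) (d2 := d2)) :=
    ((ContinuousLinearMap.snd ℝ (EuclideanSpace ℝ (Fin m))
      (EuclideanSpace ℝ (Fin n))).comp (D.Acl H)).hasFDerivAt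
  have hfd := (D.hasFDerivAt_h H).prodMk hA2
  have hEq : (D.Acl H) =
      (D.Dh (d1 := d1) (d2 := d2) (m := m)).prod
        ((ContinuousLinearMap.snd ℝ (EuclideanSpace ℝ (Fin m))
          (EuclideanSpace ℝ (Fin n))).comp (D.Acl H)) := by
    apply ContinuousLinearMap.ext
    intro w
    apply Prod.ext
    · exact D.A_fst H w
    · rfl
  show HasFDerivAt (D.Φ H) (D.Acl H) (D.q0 (d1 := d1) (d2 := d2))
  rw [hEq]
  exact hfd

lemma hasStrictFDerivAt_Φ : HasStrictFDerivAt (D.Φ H)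
    ((D.A H : (EuclideanSpace ℝ (Fin d1) × EuclideanSpace ℝ (Fin d2)) →L[ℝ]
      (EuclideanSpace ℝ (Fin m) × EuclideanSpace ℝ (Fin n))))
    (D.q0 (d1 := d1) (d2 := d2)) := by
  have hcd : ContDiffAt ℝ (⊤ : ℕ∞) (D.Φ H) (D.q0 (d1 := d1) (d2 := d2)) :=
    (D.contDiffOn_Φ H).contDiffAt ((D.isOpen_Ω H).mem_nhds D.q0_mem_Ω)
  exact hcd.hasStrictFDerivAt' (f' := D.A H) (D.hasFDerivAt_Φ_q0 H) (ne_of_gt (lt_of_lt_of_le zero_lt_one oneLeInftyAux))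

def Φloc : OpenPartialHomeomorph (EuclideanSpace ℝ (Fin d1) × EuclideanSpace ℝ (Fin d2))
    (EuclideanSpace ℝ (Fin m) × EuclideanSpace ℝ (Fin n)) :=
  (D.hasStrictFDerivAt_Φ H).toOpenPartialHomeomorph _

lemma Φloc_coe : (D.Φloc H : _ → _) = D.Φ H := rfl

def Θ : (EuclideanSpace ℝ (Fin d1) × EuclideanSpace ℝ (Fin d2)) →
    (EuclideanSpace ℝ (Fin d1) × EuclideanSpace ℝ (Fin d2)) :=
  fun w => (D.A H).symm (D.Φ H w)

def Λ : Set (EuclideanSpace ℝ (Fin d1) × EuclideanSpace ℝ (Fin d2)) :=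
  {w | w ∈ D.Ω (d1 := d1) (d2 := d2) (m := m) ∧
    ‖fderiv ℝ (D.Θ H) w -
      ContinuousLinearMap.id ℝ (EuclideanSpace ℝ (Fin d1) × EuclideanSpace ℝ (Fin d2))‖ < 1/2}

lemma contDiffOn_Θ : ContDiffOn ℝ (⊤ : ℕ∞) (D.Θ H) (D.Ω (d1 := d1) (d2 := d2) (m := m)) := by
  exact (D.Asymcl H).contDiff.comp_contDiffOn (D.contDiffOn_Φ H)

lemma isOpen_Λ : IsOpen (D.Λ H) := by
  have hc : ContinuousOn (fderiv ℝ (D.Θ H)) (D.Ω (d1 := d1) (d2 := d2) (m := m)) :=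
    (D.contDiffOn_Θ H).continuousOn_fderiv_of_isOpen (D.isOpen_Ω H) oneLeInftyAux
  have hU : IsOpen {T : (EuclideanSpace ℝ (Fin d1) × EuclideanSpace ℝ (Fin d2)) →L[ℝ]
      (EuclideanSpace ℝ (Fin d1) × EuclideanSpace ℝ (Fin d2)) |
      ‖T - ContinuousLinearMap.id ℝ (EuclideanSpace ℝ (Fin d1) × EuclideanSpace ℝ (Fin d2))‖
        < 1/2} :=
    isOpen_lt ((continuous_id.sub continuous_const).norm) continuous_const
  exact hc.isOpen_inter_preimage (D.isOpen_Ω H) hU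

lemma q0_mem_Λ : D.q0 (d1 := d1) (d2 := d2) ∈ D.Λ H := by
  refine ⟨D.q0_mem_Ω, ?_⟩
  have hΘ : HasFDerivAt (D.Θ H) ((D.Asymcl H).comp (D.Acl H))
      (D.q0 (d1 := d1) (d2 := d2)) :=
    ((D.Asymcl H).hasFDerivAt).comp _ (D.hasFDerivAt_Φ_q0 H)
  rw [hΘ.fderiv]
  have hid : (D.Asymcl H).comp (D.Acl H) =
      ContinuousLinearMap.id ℝ (EuclideanSpace ℝ (Fin d1) × EuclideanSpace ℝ (Fin d2)) := by
    apply ContinuousLinearMap.ext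
    intro w
    simp [Acl, Asymcl]
  rw [hid]
  norm_num

/-- invertibility of the derivative of Φ on Λ -/
lemma exists_deriv_equiv {w : EuclideanSpace ℝ (Fin d1) × EuclideanSpace ℝ (Fin d2)}
    (hw : w ∈ D.Λ H) :
    ∃ B : (EuclideanSpace ℝ (Fin d1) × EuclideanSpace ℝ (Fin d2)) ≃L[ℝ]
      (EuclideanSpace ℝ (Fin m) × EuclideanSpace ℝ (Fin n)),
      HasStrictFDerivAt (D.Φ H)
        ((B : (EuclideanSpace ℝ (Fin d1) × EuclideanSpace ℝ (Fin d2)) →L[ℝ]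
          (EuclideanSpace ℝ (Fin m) × EuclideanSpace ℝ (Fin n)))) w := by
  obtain ⟨hwΩ, hwn⟩ := hw
  have hcdw : ContDiffAt ℝ (⊤ : ℕ∞) (D.Φ H) w :=
    (D.contDiffOn_Φ H).contDiffAt ((D.isOpen_Ω H).mem_nhds hwΩ)
  have hΘd : DifferentiableAt ℝ (D.Θ H) w :=
    ((D.contDiffOn_Θ H).contDiffAt ((D.isOpen_Ω H).mem_nhds hwΩ)).differentiableAt (ne_of_gt (lt_of_lt_of_le zero_lt_one oneLeInftyAux))
  set t := fderiv ℝ (D.Θ H) w with ht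
  have hzero : ∀ x, t x = 0 → x = 0 := by
    intro x hx
    have h1 : ‖x‖ ≤ 1/2 * ‖x‖ := by
      calc ‖x‖ = ‖(t - ContinuousLinearMap.id ℝ
          (EuclideanSpace ℝ (Fin d1) × EuclideanSpace ℝ (Fin d2))) x‖ := by
            simp [hx, norm_neg]
        _ ≤ ‖t - ContinuousLinearMap.id ℝ
            (EuclideanSpace ℝ (Fin d1) × EuclideanSpace ℝ (Fin d2))‖ * ‖x‖ :=
          ContinuousLinearMap.le_opNorm _ _
        _ ≤ 1/2 * ‖x‖ := by
          apply mul_le_mul_of_nonneg_right hwn.le (norm_nonneg x)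
    have h2 : ‖x‖ ≤ 0 := by linarith
    exact norm_le_zero_iff.mp h2
  have htinj : Function.Injective t := by
    intro a c hac
    have : t (a - c) = 0 := by rw [map_sub, sub_eq_zero]; exact hac
    have := hzero (a - c) this
    rwa [sub_eq_zero] at this
  have htsurj : Function.Surjective t :=
    (LinearMap.injective_iff_surjective_of_finrank_eq_finrank rfl).mp htinj
  set tE := LinearEquiv.ofBijective
    (t : (EuclideanSpace ℝ (Fin d1) × EuclideanSpace ℝ (Fin d2)) →ₗ[ℝ] _)
    ⟨htinj, fun y => htsurj y⟩ with htE
  refine ⟨tE.toContinuousLinearEquiv.trans (D.A H), ?_⟩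
  have hΦw : HasFDerivAt (D.Φ H) ((D.Acl H).comp t) w := by
    have h1 : HasFDerivAt (D.Θ H) t w := hΘd.hasFDerivAt
    have h2 : D.Φ H = fun u => (D.A H) ((D.A H).symm (D.Φ H u)) := by
      funext u
      simp
    rw [h2]
    exact ((D.Acl H).hasFDerivAt).comp _ h1
  have hBcoe : ((tE.toContinuousLinearEquiv.trans (D.A H) :
      (EuclideanSpace ℝ (Fin d1) × EuclideanSpace ℝ (Fin d2)) →L[ℝ]
      (EuclideanSpace ℝ (Fin m) × EuclideanSpace ℝ (Fin n)))) = (D.Acl H).comp t := by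
    apply ContinuousLinearMap.ext
    intro u
    have h3 : tE.toContinuousLinearEquiv u = tE u := by
      rw [← LinearEquiv.coe_toContinuousLinearEquiv' tE]
    simp only [ContinuousLinearEquiv.coe_coe, ContinuousLinearEquiv.trans_apply, h3,
      ContinuousLinearMap.coe_comp', Function.comp_apply]
    rfl
  rw [hBcoe]
  exact hcdw.hasStrictFDerivAt' ((hBcoe.symm) ▸ hΦw) (ne_of_gt (lt_of_lt_of_le zero_lt_one oneLeInftyAux))

def V : Set (EuclideanSpace ℝ (Fin d1) × EuclideanSpace ℝ (Fin d2)) :=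
  D.Λ H ∩ (D.Φloc H).source

lemma isOpen_V : IsOpen (D.V H) :=
  (D.isOpen_Λ H).inter (D.Φloc H).open_source

lemma q0_mem_V : D.q0 (d1 := d1) (d2 := d2) ∈ D.V H :=
  ⟨D.q0_mem_Λ H, (D.hasStrictFDerivAt_Φ H).mem_toOpenPartialHomeomorph_source⟩

def O : Set (EuclideanSpace ℝ (Fin m) × EuclideanSpace ℝ (Fin n)) :=
  (D.Φloc H).target ∩ (D.Φloc H).symm ⁻¹' (D.V H)

lemma isOpen_O : IsOpen (D.O H) :=
  (D.Φloc H).isOpen_inter_preimage_symm (D.isOpen_V H)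

lemma contDiffOn_Φloc_symm : ContDiffOn ℝ (⊤ : ℕ∞) (D.Φloc H).symm (D.O H) := by
  intro y hy
  obtain ⟨hyT, hyV⟩ := hy
  obtain ⟨hwΛ, hwsrc⟩ := hyV
  obtain ⟨B, hB⟩ := D.exists_deriv_equiv H hwΛ
  have hcdw : ContDiffAt ℝ (⊤ : ℕ∞) (D.Φ H) ((D.Φloc H).symm y) :=
    (D.contDiffOn_Φ H).contDiffAt ((D.isOpen_Ω H).mem_nhds hwΛ.1)
  have hca : ContDiffAt ℝ (⊤ : ℕ∞) (D.Φloc H).symm y :=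
    (D.Φloc H).contDiffAt_symm hyT hB.hasFDerivAt hcdw
  exact hca.contDiffWithinAt

end TPt

section SubtypePart

/-- choice of a σ1-preimage of a point of the intersection -/
def rho1 (s : ↥(Set.range σ1 ∩ Set.range σ2)) : P1 := s.2.1.choose

def rho2 (s : ↥(Set.range σ1 ∩ Set.range σ2)) : P2 := s.2.2.choose

lemma rho1_spec (s : ↥(Set.range σ1 ∩ Set.range σ2)) : σ1 (rho1 s) = s.val :=
  s.2.1.choose_spec

lemma rho2_spec (s : ↥(Set.range σ1 ∩ Set.range σ2)) : σ2 (rho2 s) = s.val :=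
  s.2.2.choose_spec

lemma rho1_eq (hinj1 : Function.Injective σ1) {x : P1}
    {s : ↥(Set.range σ1 ∩ Set.range σ2)} (h : σ1 x = s.val) : rho1 s = x :=
  hinj1 (by rw [rho1_spec s, h])

lemma rho2_eq (hinj2 : Function.Injective σ2) {x : P2}
    {s : ↥(Set.range σ1 ∩ Set.range σ2)} (h : σ2 x = s.val) : rho2 s = x :=
  hinj2 (by rw [rho2_spec s, h])

lemma continuous_rho1 (hemb1 : Topology.IsEmbedding σ1) :
    Continuous (rho1 (σ1 := σ1) (σ2 := σ2)) := by
  rw [hemb1.continuous_iff]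
  have hcomp : (σ1 ∘ rho1 (σ1 := σ1) (σ2 := σ2)) = Subtype.val :=
    funext fun s => rho1_spec s
  rw [hcomp]
  exact continuous_subtype_val

lemma continuous_rho2 (hemb2 : Topology.IsEmbedding σ2) :
    Continuous (rho2 (σ1 := σ1) (σ2 := σ2)) := by
  rw [hemb2.continuous_iff]
  have hcomp : (σ2 ∘ rho2 (σ1 := σ1) (σ2 := σ2)) = Subtype.val :=
    funext fun s => rho2_spec s
  rw [hcomp]
  exact continuous_subtype_val

/-- the canonical point datum attached to an intersection point -/
def Dat (s : ↥(Set.range σ1 ∩ Set.range σ2)) : TPt σ1 σ2 :=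
  ⟨rho1 s, rho2 s, by rw [rho1_spec s, rho2_spec s]⟩

end SubtypePart

namespace TPt

variable (D : TPt σ1 σ2) (H : THyp σ1 σ2 d1 d2 m n)
include H

/-- coordinates of an intersection point relative to the charts of `D` -/
def coord : ↥(Set.range σ1 ∩ Set.range σ2) →
    EuclideanSpace ℝ (Fin d1) × EuclideanSpace ℝ (Fin d2) :=
  fun s => (D.c1 (d1 := d1) (rho1 s), D.c2 (d2 := d2) (rho2 s))

def U0 : Set ↥(Set.range σ1 ∩ Set.range σ2) :=
  rho1 ⁻¹' (D.c1 (d1 := d1)).source ∩ rho2 ⁻¹' (D.c2 (d2 := d2)).source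

def src : Set ↥(Set.range σ1 ∩ Set.range σ2) :=
  D.U0 (d1 := d1) (d2 := d2) ∩ D.coord (d1 := d1) (d2 := d2) ⁻¹' (D.V H)

def Tt : Set (EuclideanSpace ℝ (Fin n)) :=
  {t | ((0 : EuclideanSpace ℝ (Fin m)), t) ∈ D.O H}

def chi : ↥(Set.range σ1 ∩ Set.range σ2) → EuclideanSpace ℝ (Fin n) :=
  fun s => (D.A H (D.coord (d1 := d1) (d2 := d2) s)).2

lemma isOpen_U0 : IsOpen (D.U0 (d1 := d1) (d2 := d2)) :=
  (((D.c1 (d1 := d1)).open_source.preimage (continuous_rho1 H.hemb1))).inter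
    (((D.c2 (d2 := d2)).open_source.preimage (continuous_rho2 H.hemb2)))

lemma continuousOn_coord : ContinuousOn (D.coord (d1 := d1) (d2 := d2))
    (D.U0 (d1 := d1) (d2 := d2)) := by
  apply ContinuousOn.prodMk
  · exact (D.c1 (d1 := d1)).continuousOn.comp
      (continuous_rho1 H.hemb1).continuousOn (fun s hs => hs.1)
  · exact (D.c2 (d2 := d2)).continuousOn.comp
      (continuous_rho2 H.hemb2).continuousOn (fun s hs => hs.2)

lemma isOpen_src : IsOpen (D.src H) :=
  (D.continuousOn_coord H).isOpen_inter_preimage (D.isOpen_U0 H) (D.isOpen_V H)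

lemma isOpen_Tt : IsOpen (D.Tt H) :=
  (D.isOpen_O H).preimage (continuous_const.prodMk continuous_id)

/- ### facts about points of `Tt` -/

lemma T_w_mem_V {t : EuclideanSpace ℝ (Fin n)} (ht : t ∈ D.Tt H) :
    (D.Φloc H).symm ((0 : EuclideanSpace ℝ (Fin m)), t) ∈ D.V H := ht.2

lemma T_w_mem_Ω {t : EuclideanSpace ℝ (Fin n)} (ht : t ∈ D.Tt H) :
    (D.Φloc H).symm ((0 : EuclideanSpace ℝ (Fin m)), t) ∈
      D.Ω (d1 := d1) (d2 := d2) (m := m) := (D.T_w_mem_V H ht).1.1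

lemma T_Φw {t : EuclideanSpace ℝ (Fin n)} (ht : t ∈ D.Tt H) :
    D.Φ H ((D.Φloc H).symm ((0 : EuclideanSpace ℝ (Fin m)), t)) =
      ((0 : EuclideanSpace ℝ (Fin m)), t) :=
  (D.Φloc H).right_inv ht.1

lemma T_fg {t : EuclideanSpace ℝ (Fin n)} (ht : t ∈ D.Tt H) :
    σ1 ((D.c1 (d1 := d1)).symm ((D.Φloc H).symm ((0 : EuclideanSpace ℝ (Fin m)), t)).1) =
    σ2 ((D.c2 (d2 := d2)).symm ((D.Φloc H).symm ((0 : EuclideanSpace ℝ (Fin m)), t)).2) := by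
  have hΩ := D.T_w_mem_Ω H ht
  have h0 : D.h (d1 := d1) (d2 := d2) (m := m)
      ((D.Φloc H).symm ((0 : EuclideanSpace ℝ (Fin m)), t)) = 0 :=
    congrArg Prod.fst (D.T_Φw H ht)
  have hfg := sub_eq_zero.mp h0
  exact (D.cM (m := m)).injOn hΩ.1.2 hΩ.2.2 hfg

lemma mem_S_of_T {t : EuclideanSpace ℝ (Fin n)} (ht : t ∈ D.Tt H) :
    σ1 ((D.c1 (d1 := d1)).symm ((D.Φloc H).symm ((0 : EuclideanSpace ℝ (Fin m)), t)).1) ∈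
      Set.range σ1 ∩ Set.range σ2 := by
  constructor
  · exact Set.mem_range_self _
  · rw [D.T_fg H ht]
    exact Set.mem_range_self _

open Classical in
def zeta : EuclideanSpace ℝ (Fin n) → ↥(Set.range σ1 ∩ Set.range σ2) :=
  fun t => if ht : t ∈ D.Tt H then
    ⟨σ1 ((D.c1 (d1 := d1)).symm ((D.Φloc H).symm ((0 : EuclideanSpace ℝ (Fin m)), t)).1),
      D.mem_S_of_T H ht⟩
  else ⟨σ1 D.x1, ⟨Set.mem_range_self _, ⟨D.x2, D.heq⟩⟩⟩

lemma zeta_spec {t : EuclideanSpace ℝ (Fin n)} (ht : t ∈ D.Tt H) :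
    (D.zeta H t).val =
      σ1 ((D.c1 (d1 := d1)).symm ((D.Φloc H).symm ((0 : EuclideanSpace ℝ (Fin m)), t)).1) := by
  unfold zeta
  rw [dif_pos ht]

lemma rho1_zeta {t : EuclideanSpace ℝ (Fin n)} (ht : t ∈ D.Tt H) :
    rho1 (D.zeta H t) =
      (D.c1 (d1 := d1)).symm ((D.Φloc H).symm ((0 : EuclideanSpace ℝ (Fin m)), t)).1 :=
  rho1_eq H.hinj1 (by rw [D.zeta_spec H ht])

lemma rho2_zeta {t : EuclideanSpace ℝ (Fin n)} (ht : t ∈ D.Tt H) :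
    rho2 (D.zeta H t) =
      (D.c2 (d2 := d2)).symm ((D.Φloc H).symm ((0 : EuclideanSpace ℝ (Fin m)), t)).2 :=
  rho2_eq H.hinj2 (by rw [D.zeta_spec H ht, D.T_fg H ht])

lemma coord_zeta {t : EuclideanSpace ℝ (Fin n)} (ht : t ∈ D.Tt H) :
    D.coord (d1 := d1) (d2 := d2) (D.zeta H t) =
      (D.Φloc H).symm ((0 : EuclideanSpace ℝ (Fin m)), t) := by
  have hΩ := D.T_w_mem_Ω H ht
  apply Prod.ext
  · show (D.c1 (d1 := d1)) (rho1 (D.zeta H t)) = _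
    rw [D.rho1_zeta H ht]
    exact (D.c1 (d1 := d1)).right_inv hΩ.1.1
  · show (D.c2 (d2 := d2)) (rho2 (D.zeta H t)) = _
    rw [D.rho2_zeta H ht]
    exact (D.c2 (d2 := d2)).right_inv hΩ.2.1

lemma zeta_mem_src {t : EuclideanSpace ℝ (Fin n)} (ht : t ∈ D.Tt H) :
    D.zeta H t ∈ D.src H := by
  have hΩ := D.T_w_mem_Ω H ht
  refine ⟨⟨?_, ?_⟩, ?_⟩
  · show rho1 (D.zeta H t) ∈ (D.c1 (d1 := d1)).source
    rw [D.rho1_zeta H ht]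
    exact (D.c1 (d1 := d1)).map_target hΩ.1.1
  · show rho2 (D.zeta H t) ∈ (D.c2 (d2 := d2)).source
    rw [D.rho2_zeta H ht]
    exact (D.c2 (d2 := d2)).map_target hΩ.2.1
  · show D.coord (d1 := d1) (d2 := d2) (D.zeta H t) ∈ D.V H
    rw [D.coord_zeta H ht]
    exact D.T_w_mem_V H ht

lemma chi_zeta {t : EuclideanSpace ℝ (Fin n)} (ht : t ∈ D.Tt H) :
    D.chi H (D.zeta H t) = t := by
  show (D.A H (D.coord (d1 := d1) (d2 := d2) (D.zeta H t))).2 = t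
  rw [D.coord_zeta H ht]
  exact congrArg Prod.snd (D.T_Φw H ht)

/- ### facts about points of `src` -/

lemma src_h_coord {s : ↥(Set.range σ1 ∩ Set.range σ2)} (hs : s ∈ D.src H) :
    D.h (d1 := d1) (d2 := d2) (m := m) (D.coord (d1 := d1) (d2 := d2) s) = 0 := by
  show D.f (d1 := d1) (m := m) ((D.c1 (d1 := d1)) (rho1 s)) -
    D.g (d2 := d2) (m := m) ((D.c2 (d2 := d2)) (rho2 s)) = 0
  have e1 : D.f (d1 := d1) (m := m) ((D.c1 (d1 := d1)) (rho1 s)) =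
      D.cM (m := m) s.val := by
    show D.cM (m := m) (σ1 ((D.c1 (d1 := d1)).symm ((D.c1 (d1 := d1)) (rho1 s)))) = _
    rw [(D.c1 (d1 := d1)).left_inv hs.1.1, rho1_spec s]
  have e2 : D.g (d2 := d2) (m := m) ((D.c2 (d2 := d2)) (rho2 s)) =
      D.cM (m := m) s.val := by
    show D.cM (m := m) (σ2 ((D.c2 (d2 := d2)).symm ((D.c2 (d2 := d2)) (rho2 s)))) = _
    rw [(D.c2 (d2 := d2)).left_inv hs.1.2, rho2_spec s]
  rw [e1, e2, sub_self]

lemma src_Φ_coord {s : ↥(Set.range σ1 ∩ Set.range σ2)} (hs : s ∈ D.src H) :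
    D.Φ H (D.coord (d1 := d1) (d2 := d2) s) =
      ((0 : EuclideanSpace ℝ (Fin m)), D.chi H s) := by
  apply Prod.ext
  · exact D.src_h_coord H hs
  · rfl

lemma chi_mem_Tt {s : ↥(Set.range σ1 ∩ Set.range σ2)} (hs : s ∈ D.src H) :
    D.chi H s ∈ D.Tt H := by
  show ((0 : EuclideanSpace ℝ (Fin m)), D.chi H s) ∈ D.O H
  rw [← D.src_Φ_coord H hs]
  have hsrc : D.coord (d1 := d1) (d2 := d2) s ∈ (D.Φloc H).source := hs.2.2
  constructor
  · exact (D.Φloc H).map_source hsrc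
  · show (D.Φloc H).symm ((D.Φloc H) (D.coord (d1 := d1) (d2 := d2) s)) ∈ D.V H
    rw [(D.Φloc H).left_inv hsrc]
    exact hs.2

lemma zeta_chi {s : ↥(Set.range σ1 ∩ Set.range σ2)} (hs : s ∈ D.src H) :
    D.zeta H (D.chi H s) = s := by
  have h1 : D.chi H s ∈ D.Tt H := D.chi_mem_Tt H hs
  apply Subtype.ext
  rw [D.zeta_spec H h1]
  have hw : (D.Φloc H).symm ((0 : EuclideanSpace ℝ (Fin m)), D.chi H s) =
      D.coord (d1 := d1) (d2 := d2) s := by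
    rw [← D.src_Φ_coord H hs]
    exact (D.Φloc H).left_inv hs.2.2
  rw [hw]
  show σ1 ((D.c1 (d1 := d1)).symm ((D.c1 (d1 := d1)) (rho1 s))) = s.val
  rw [(D.c1 (d1 := d1)).left_inv hs.1.1, rho1_spec s]

lemma continuousOn_chi : ContinuousOn (D.chi H) (D.src H) := by
  have h1 : Continuous (fun w => (D.A H w).2) := by
    have := (D.Acl H).continuous
    exact (continuous_snd.comp this)
  exact h1.comp_continuousOn
    ((D.continuousOn_coord H).mono Set.inter_subset_left)

lemma continuousOn_zeta : ContinuousOn (D.zeta H) (D.Tt H) := by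
  rw [Topology.IsInducing.subtypeVal.continuousOn_iff]
  have hval : ∀ t ∈ D.Tt H, (Subtype.val ∘ D.zeta H) t =
      σ1 ((D.c1 (d1 := d1)).symm ((D.Φloc H).symm
        ((0 : EuclideanSpace ℝ (Fin m)), t)).1) := fun t ht => D.zeta_spec H ht
  apply ContinuousOn.congr _ hval
  apply H.hσ1.continuous.comp_continuousOn
  apply (D.c1 (d1 := d1)).continuousOn_symm.comp
  · apply (continuous_fst.comp_continuousOn)
    apply (D.Φloc H).continuousOn_symm.comp
      (continuous_const.prodMk continuous_id).continuousOn
    intro t ht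
    exact ht.1
  · intro t ht
    exact (D.T_w_mem_Ω H ht).1.1

/-- the chart of the intersection associated to a point datum -/
def chart : OpenPartialHomeomorph ↥(Set.range σ1 ∩ Set.range σ2)
    (EuclideanSpace ℝ (Fin n)) where
  toFun := D.chi H
  invFun := D.zeta H
  source := D.src H
  target := D.Tt H
  map_source' := fun _ hs => D.chi_mem_Tt H hs
  map_target' := fun _ ht => D.zeta_mem_src H ht
  left_inv' := fun _ hs => D.zeta_chi H hs
  right_inv' := fun _ ht => D.chi_zeta H ht
  open_source := D.isOpen_src H
  open_target := D.isOpen_Tt H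
  continuousOn_toFun := D.continuousOn_chi H
  continuousOn_invFun := D.continuousOn_zeta H

omit H in
lemma coord_Dat_self (s : ↥(Set.range σ1 ∩ Set.range σ2)) :
    (Dat s).coord (d1 := d1) (d2 := d2) s = (Dat s).q0 (d1 := d1) (d2 := d2) := rfl

omit H in
lemma isOpen_ctset1 (D D' : TPt σ1 σ2) :
    IsOpen ((D.c1 (d1 := d1)).target ∩
      (D.c1 (d1 := d1)).symm ⁻¹' (D'.c1 (d1 := d1)).source) :=
  (D.c1 (d1 := d1)).continuousOn_symm.isOpen_inter_preimage
    (D.c1 (d1 := d1)).open_target (D'.c1 (d1 := d1)).open_source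

omit H in
lemma isOpen_ctset2 (D D' : TPt σ1 σ2) :
    IsOpen ((D.c2 (d2 := d2)).target ∩
      (D.c2 (d2 := d2)).symm ⁻¹' (D'.c2 (d2 := d2)).source) :=
  (D.c2 (d2 := d2)).continuousOn_symm.isOpen_inter_preimage
    (D.c2 (d2 := d2)).open_target (D'.c2 (d2 := d2)).open_source

omit H in
lemma contDiffOn_chartTrans1 (D D' : TPt σ1 σ2) :
    ContDiffOn ℝ (⊤ : ℕ∞) (fun a => (D'.c1 (d1 := d1)) ((D.c1 (d1 := d1)).symm a))
      ((D.c1 (d1 := d1)).target ∩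
        (D.c1 (d1 := d1)).symm ⁻¹' (D'.c1 (d1 := d1)).source) := by
  have hc1 : ContMDiffOn (𝓡 d1) (𝓡 d1) (⊤ : ℕ∞) (D.c1 (d1 := d1)).symm (D.c1 (d1 := d1)).target :=
    contMDiffOn_chart_symm
  have hc1' : ContMDiffOn (𝓡 d1) (𝓡 d1) (⊤ : ℕ∞) (D'.c1 (d1 := d1)) (D'.c1 (d1 := d1)).source :=
    contMDiffOn_chart
  have hcomp : ContMDiffOn (𝓡 d1) (𝓡 d1) (⊤ : ℕ∞)
      ((D'.c1 (d1 := d1)) ∘ (D.c1 (d1 := d1)).symm)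
      ((D.c1 (d1 := d1)).target ∩
        (D.c1 (d1 := d1)).symm ⁻¹' (D'.c1 (d1 := d1)).source) :=
    hc1'.comp (hc1.mono inter_subset_left) (fun w hw => hw.2)
  exact contMDiffOn_iff_contDiffOn.mp hcomp

omit H in
lemma contDiffOn_chartTrans2 (D D' : TPt σ1 σ2) :
    ContDiffOn ℝ (⊤ : ℕ∞) (fun a => (D'.c2 (d2 := d2)) ((D.c2 (d2 := d2)).symm a))
      ((D.c2 (d2 := d2)).target ∩
        (D.c2 (d2 := d2)).symm ⁻¹' (D'.c2 (d2 := d2)).source) := by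
  have hc2 : ContMDiffOn (𝓡 d2) (𝓡 d2) (⊤ : ℕ∞) (D.c2 (d2 := d2)).symm (D.c2 (d2 := d2)).target :=
    contMDiffOn_chart_symm
  have hc2' : ContMDiffOn (𝓡 d2) (𝓡 d2) (⊤ : ℕ∞) (D'.c2 (d2 := d2)) (D'.c2 (d2 := d2)).source :=
    contMDiffOn_chart
  have hcomp : ContMDiffOn (𝓡 d2) (𝓡 d2) (⊤ : ℕ∞)
      ((D'.c2 (d2 := d2)) ∘ (D.c2 (d2 := d2)).symm)
      ((D.c2 (d2 := d2)).target ∩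
        (D.c2 (d2 := d2)).symm ⁻¹' (D'.c2 (d2 := d2)).source) :=
    hc2'.comp (hc2.mono inter_subset_left) (fun w hw => hw.2)
  exact contMDiffOn_iff_contDiffOn.mp hcomp

lemma contDiffOn_transition (D' : TPt σ1 σ2) :
    ContDiffOn ℝ (⊤ : ℕ∞) ((D.chart H).symm ≫ₕ (D'.chart H))
      ((D.chart H).symm ≫ₕ (D'.chart H)).source := by
  intro t ht
  have hts : ((D.chart H).symm ≫ₕ (D'.chart H)).source =
      (D.chart H).target ∩ (D.chart H).symm ⁻¹' (D'.chart H).source := by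
    rw [OpenPartialHomeomorph.trans_source, OpenPartialHomeomorph.symm_source]
  rw [hts] at ht
  have ht1 : t ∈ D.Tt H := ht.1
  have ht2 : D.zeta H t ∈ D'.src H := ht.2
  -- the smooth formula
  set F : EuclideanSpace ℝ (Fin n) → EuclideanSpace ℝ (Fin n) := fun u =>
    (D'.A H ((D'.c1 (d1 := d1)) ((D.c1 (d1 := d1)).symm
        (((D.Φloc H).symm ((0 : EuclideanSpace ℝ (Fin m)), u)).1)),
      (D'.c2 (d2 := d2)) ((D.c2 (d2 := d2)).symm
        (((D.Φloc H).symm ((0 : EuclideanSpace ℝ (Fin m)), u)).2)))).2 with hF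
  have hG : ContDiffAt ℝ (⊤ : ℕ∞)
      (fun u : EuclideanSpace ℝ (Fin n) =>
        (D.Φloc H).symm ((0 : EuclideanSpace ℝ (Fin m)), u)) t := by
    have h0 : ContDiffAt ℝ (⊤ : ℕ∞)
        (fun u : EuclideanSpace ℝ (Fin n) =>
          ((0 : EuclideanSpace ℝ (Fin m)), u)) t :=
      (contDiff_const.prodMk contDiff_id).contDiffAt
    have h1 : ContDiffAt ℝ (⊤ : ℕ∞) (D.Φloc H).symm
        ((0 : EuclideanSpace ℝ (Fin m)), t) :=
      (D.contDiffOn_Φloc_symm H).contDiffAt ((D.isOpen_O H).mem_nhds ht1)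
    exact h1.comp t h0
  have hwΩ := D.T_w_mem_Ω H ht1
  have hw1mem : ((D.Φloc H).symm ((0 : EuclideanSpace ℝ (Fin m)), t)).1 ∈
      (D.c1 (d1 := d1)).target ∩
        (D.c1 (d1 := d1)).symm ⁻¹' (D'.c1 (d1 := d1)).source := by
    refine ⟨hwΩ.1.1, ?_⟩
    show (D.c1 (d1 := d1)).symm _ ∈ (D'.c1 (d1 := d1)).source
    rw [← D.rho1_zeta H ht1]
    exact ht2.1.1
  have hw2mem : ((D.Φloc H).symm ((0 : EuclideanSpace ℝ (Fin m)), t)).2 ∈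
      (D.c2 (d2 := d2)).target ∩
        (D.c2 (d2 := d2)).symm ⁻¹' (D'.c2 (d2 := d2)).source := by
    refine ⟨hwΩ.2.1, ?_⟩
    show (D.c2 (d2 := d2)).symm _ ∈ (D'.c2 (d2 := d2)).source
    rw [← D.rho2_zeta H ht1]
    exact ht2.1.2
  have hτ1 : ContDiffAt ℝ (⊤ : ℕ∞)
      (fun a => (D'.c1 (d1 := d1)) ((D.c1 (d1 := d1)).symm a))
      ((D.Φloc H).symm ((0 : EuclideanSpace ℝ (Fin m)), t)).1 :=
    (contDiffOn_chartTrans1 D D').contDiffAt ((isOpen_ctset1 D D').mem_nhds hw1mem)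
  have hτ2 : ContDiffAt ℝ (⊤ : ℕ∞)
      (fun a => (D'.c2 (d2 := d2)) ((D.c2 (d2 := d2)).symm a))
      ((D.Φloc H).symm ((0 : EuclideanSpace ℝ (Fin m)), t)).2 :=
    (contDiffOn_chartTrans2 D D').contDiffAt ((isOpen_ctset2 D D').mem_nhds hw2mem)
  have hτ : ContDiffAt ℝ (⊤ : ℕ∞)
      (fun w : EuclideanSpace ℝ (Fin d1) × EuclideanSpace ℝ (Fin d2) =>
        ((D'.c1 (d1 := d1)) ((D.c1 (d1 := d1)).symm w.1),
         (D'.c2 (d2 := d2)) ((D.c2 (d2 := d2)).symm w.2)))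
      ((D.Φloc H).symm ((0 : EuclideanSpace ℝ (Fin m)), t)) :=
    (hτ1.comp _ contDiff_fst.contDiffAt).prodMk (hτ2.comp _ contDiff_snd.contDiffAt)
  have hA2 : ContDiff ℝ (⊤ : ℕ∞) (fun v => (D'.A H v).2) :=
    contDiff_snd.comp (D'.Acl H).contDiff
  have hFc : ContDiffAt ℝ (⊤ : ℕ∞) F t :=
    hA2.contDiffAt.comp t (hτ.comp t hG)
  have heq : ∀ u ∈ ((D.chart H).symm ≫ₕ (D'.chart H)).source,
      ((D.chart H).symm ≫ₕ (D'.chart H)) u = F u := by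
    intro u hu
    rw [hts] at hu
    have hu1 : u ∈ D.Tt H := hu.1
    show D'.chi H (D.zeta H u) = F u
    have : D'.chi H (D.zeta H u) =
        (D'.A H ((D'.c1 (d1 := d1)) (rho1 (D.zeta H u)),
          (D'.c2 (d2 := d2)) (rho2 (D.zeta H u)))).2 := rfl
    rw [this, D.rho1_zeta H hu1, D.rho2_zeta H hu1]
  have hev : ((D.chart H).symm ≫ₕ (D'.chart H) : _ → _) =ᶠ[nhds t] F := by
    have hopen : IsOpen ((D.chart H).symm ≫ₕ (D'.chart H)).source :=
      ((D.chart H).symm ≫ₕ (D'.chart H)).open_source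
    filter_upwards [hopen.mem_nhds (by rw [hts]; exact ht)] with u hu
    exact heq u hu
  exact ((hFc.congr_of_eventuallyEq hev).contDiffWithinAt)

end TPt

section Instances

/-- The charted space structure on the intersection. -/
def instChartedS (H : THyp σ1 σ2 d1 d2 m n) :
    ChartedSpace (EuclideanSpace ℝ (Fin n)) ↥(Set.range σ1 ∩ Set.range σ2) where
  atlas := Set.range (fun s : ↥(Set.range σ1 ∩ Set.range σ2) => (Dat s).chart H)
  chartAt s := (Dat s).chart H
  mem_chart_source s := by
    refine ⟨⟨?_, ?_⟩, ?_⟩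
    · exact mem_chart_source _ _
    · exact mem_chart_source _ _
    · show (Dat s).coord (d1 := d1) (d2 := d2) s ∈ (Dat s).V H
      rw [TPt.coord_Dat_self]
      exact (Dat s).q0_mem_V H
  chart_mem_atlas s := ⟨s, rfl⟩

theorem instSmoothS (H : THyp σ1 σ2 d1 d2 m n) :
    @IsManifold ℝ _ (EuclideanSpace ℝ (Fin n)) _ _
      (EuclideanSpace ℝ (Fin n)) _ (𝓡 n) (⊤ : ℕ∞) ↥(Set.range σ1 ∩ Set.range σ2) _
      (instChartedS H) := by
  letI := instChartedS (σ1 := σ1) (σ2 := σ2) H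
  apply isManifold_of_contDiffOn
  intro e e' he he'
  obtain ⟨s, rfl⟩ := he
  obtain ⟨s', rfl⟩ := he'
  simp only [modelWithCornersSelf_coe, modelWithCornersSelf_coe_symm, Function.comp_id,
    Function.id_comp, preimage_id, range_id, inter_univ, id_eq]
  exact (Dat s).contDiffOn_transition H (Dat s')

end Instances

end TransverseIntersection

theorem unstable_stable_intersection_submanifold
    {m b indB indB' : ℕ} (hb' : indB' ≤ m) (hle : indB' ≤ indB)
    {M : Type*} [TopologicalSpace M]
    [ChartedSpace (EuclideanSpace ℝ (Fin m)) M]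
    [IsManifold (𝓡 m) (⊤ : ℕ∞) M]
    -- the unstable manifold `W^u(B)`, of dimension `b + ind B`
    {P1 : Type*} [TopologicalSpace P1]
    [ChartedSpace (EuclideanSpace ℝ (Fin (b + indB))) P1]
    [IsManifold (𝓡 (b + indB)) (⊤ : ℕ∞) P1]
    -- the stable manifold `W^s(B')`, of dimension `m - ind B'`
    {P2 : Type*} [TopologicalSpace P2]
    [ChartedSpace (EuclideanSpace ℝ (Fin (m - indB'))) P2]
    [IsManifold (𝓡 (m - indB')) (⊤ : ℕ∞) P2]
    (σ1 : P1 → M) (σ2 : P2 → M)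
    (hσ1 : ContMDiff (𝓡 (b + indB)) (𝓡 m) (⊤ : ℕ∞) σ1)
    (hσ2 : ContMDiff (𝓡 (m - indB')) (𝓡 m) (⊤ : ℕ∞) σ2)
    (hinj1 : Function.Injective σ1) (hinj2 : Function.Injective σ2)
    (hemb1 : Topology.IsEmbedding σ1) (hemb2 : Topology.IsEmbedding σ2)
    -- Morse--Bott--Smale transversality
    (htrans : ∀ (x1 : P1) (x2 : P2), σ1 x1 = σ2 x2 →
      ∀ v : EuclideanSpace ℝ (Fin m),
        ∃ (u1 : TangentSpace (𝓡 (b + indB)) x1)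
          (u2 : TangentSpace (𝓡 (m - indB')) x2),
          v = tangentToE (mfderiv (𝓡 (b + indB)) (𝓡 m) σ1 x1 u1) +
              tangentToE (mfderiv (𝓡 (m - indB')) (𝓡 m) σ2 x2 u2))
    -- `W(B, B') = W^u(B) ∩ W^s(B')` is nonempty
    (hne : (Set.range σ1 ∩ Set.range σ2).Nonempty) :
    ∃ _cs : ChartedSpace (EuclideanSpace ℝ (Fin (indB - indB' + b)))
        ↥(Set.range σ1 ∩ Set.range σ2),
      @IsManifold ℝ _
        (EuclideanSpace ℝ (Fin (indB - indB' + b))) _ _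
        (EuclideanSpace ℝ (Fin (indB - indB' + b))) _ (𝓡 (indB - indB' + b)) (⊤ : ℕ∞)
        ↥(Set.range σ1 ∩ Set.range σ2) _ _cs := by
  have H : THyp σ1 σ2 (b + indB) (m - indB') m (indB - indB' + b) :=
    { hdim := by omega
      hσ1 := hσ1
      hσ2 := hσ2
      hinj1 := hinj1
      hinj2 := hinj2
      hemb1 := hemb1
      hemb2 := hemb2
      htrans := by
        intro x1 x2 hx v
        obtain ⟨u1, u2, hv⟩ := htrans x1 x2 hx v
        exact ⟨u1, u2, hv⟩ }
  exact ⟨instChartedS H, instSmoothS H⟩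
end

section
/- Under the hypotheses of the previous setup (maps $\partial_{[j]}$ with $\sum_{q=0}^j \partial_{[q]}\partial_{[j-q]} = 0$, and $\partial_{[0]}$ an isomorphism in positive even degrees and zero otherwise), for every $c_0 \in \mathcal{C}_0(B_k)$ there exists a unique tuple $(c_1, \dots, c_k) \in \mathcal{C}_1(B_{k-1}) \oplus \cdots \oplus \mathcal{C}_k(B_0)$ such that: (1) $c_i = 0$ for $i$ odd; (2) writing $(d_0, \dots, d_{k-1}) = \boldsymbol{\partial}_k(c_0, \dots, c_k)$, one has $d_i = 0$ for $i$ odd and $d_i = -\partial_{[0]}^{-1}(\partial_{[i]}(d_0) + \partial_{[i-2]}(d_2) + \cdots + \partial_{[2]}(d_{i-2}))$ for $i$ positive even. -/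
/-!
STATEMENT 15 (canonical embedding lemma): With maps
`∂_{[j]} : C p i →+ C (p+j-1) (i-j)` satisfying
`∑_{q=0}^j ∂_{[q]} ∘ ∂_{[j-q]} = 0`, and `∂_{[0]}` an isomorphism in positive
even degrees and zero otherwise, for every `c₀ ∈ 𝒞_0(B_k)` there is a unique
tuple `(c₁, …, c_k) ∈ 𝒞_1(B_{k-1}) ⊕ ⋯ ⊕ 𝒞_k(B_0)` such that
(1) `c_i = 0` for `i` odd, and
(2) writing `(d_0, …, d_{k-1}) = 𝛛_k(c₀, …, c_k)` (so
`d_i = ∑_{j=0}^{i+1} ∂_{[j]}(c_{i+1-j})`), one has `d_i = 0` for `i` odd and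
`∂_{[0]}(d_i) = -(∂_{[i]}(d_0) + ∂_{[i-2]}(d_2) + ⋯ + ∂_{[2]}(d_{i-2}))`
(the formula `d_i = -∂_{[0]}^{-1}(⋯)`) for `i` positive even.
The tuple is encoded as a function `c : ℤ → 𝒞_i(B_{k-i})` with `c 0 = c₀` and
`c i = 0` outside `0 ≤ i ≤ k`.
-/

/-- Transport along equalities of the two degrees. -/
def castC {C : ℤ → ℤ → Type u} [∀ p i, AddCommGroup (C p i)] {a a' b b' : ℤ}
    (h1 : a = a') (h2 : b = b') : C a b ≃+ C a' b' := by
  subst h1; subst h2; exact AddEquiv.refl _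

universe u

set_option linter.unusedSectionVars false

theorem sum_triangle {M : Type*} [AddCommMonoid M] (N : ℤ) (f : ℤ → ℤ → M)
    (hf : ∀ j l, 0 ≤ j → 0 ≤ l → N < j + l → f j l = 0) :
    ∑ j ∈ Finset.Icc 0 N, ∑ l ∈ Finset.Icc 0 N, f j l
      = ∑ s ∈ Finset.Icc 0 N, ∑ q ∈ Finset.Icc 0 s, f q (s - q) := by
  rw [← Finset.sum_product']
  trans ∑ x ∈ (Finset.Icc (0:ℤ) N).sigma (fun s => Finset.Icc (0:ℤ) s), f x.2 (x.1 - x.2)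
  · rw [show (Finset.Icc (0:ℤ) N ×ˢ Finset.Icc (0:ℤ) N).sum (fun p => f p.1 p.2)
        = ∑ p ∈ (Finset.Icc (0:ℤ) N ×ˢ Finset.Icc (0:ℤ) N).filter (fun p => p.1 + p.2 ≤ N), f p.1 p.2 from
      (Finset.sum_subset (Finset.filter_subset _ _) (by
        intro p hp hnp
        simp only [Finset.mem_filter, Finset.mem_product, Finset.mem_Icc] at hp hnp
        exact hf p.1 p.2 hp.1.1 hp.2.1 (by omega))).symm]
    refine Finset.sum_nbij' (fun p => ⟨p.1 + p.2, p.1⟩) (fun x => (x.2, x.1 - x.2)) ?_ ?_ ?_ ?_ ?_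
    · intro p hp
      simp only [Finset.mem_filter, Finset.mem_product, Finset.mem_Icc, Finset.mem_sigma] at hp ⊢
      omega
    · intro x hx
      simp only [Finset.mem_filter, Finset.mem_product, Finset.mem_Icc, Finset.mem_sigma] at hx ⊢
      omega
    · intro p _; simp
    · intro x _; simp
    · intro p _; simp
  · rw [Finset.sum_sigma]

section
variable {C : ℤ → ℤ → Type u} [∀ p i, AddCommGroup (C p i)]

theorem castC_self {a b : ℤ} (h1 : a = a) (h2 : b = b) (x : C a b) : castC (C:=C) h1 h2 x = x := rfl

theorem castC_castC {a a' a'' b b' b'' : ℤ} (h1 : a = a') (h2 : b = b')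
    (h1' : a' = a'') (h2' : b' = b'') (x : C a b) :
    castC (C:=C) h1' h2' (castC (C:=C) h1 h2 x) = castC (C:=C) (h1.trans h1') (h2.trans h2') x := by
  subst h1 h2 h1' h2'; rfl

theorem dcast (d : ∀ j p i : ℤ, C p i →+ C (p + j - 1) (i - j))
    {j j' p q p' q' a b : ℤ} (hj : j = j') (hp : p = p') (hq : q = q')
    (h1 : p + j - 1 = a) (h2 : q - j = b) (h1' : p' + j' - 1 = a) (h2' : q' - j' = b)
    (x : C p q) (x' : C p' q') (hx : castC (C:=C) hp hq x = x') :
    castC (C:=C) h1 h2 (d j p q x) = castC (C:=C) h1' h2' (d j' p' q' x') := by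
  subst hj hp hq hx; rfl

theorem castC_fn {f g : ℤ → ℤ} (F : ∀ n : ℤ, C (f n) (g n)) {n n' : ℤ} (h : n = n')
    (h1 : f n = f n') (h2 : g n = g n') : castC (C:=C) h1 h2 (F n) = F n' := by
  subst h; rfl

variable (d : ∀ j p i : ℤ, C p i →+ C (p + j - 1) (i - j)) (k : ℤ)

noncomputable def DD (c : ∀ i : ℤ, C i (k - i)) (q : ℤ) : C q (k - 1 - q) :=
  ∑ j ∈ Finset.Icc (0:ℤ) (q + 1),
    castC (C := C) (by ring) (by ring) (d j (q + 1 - j) (k - (q + 1 - j)) (c (q + 1 - j)))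

theorem DD_neg
    (hd0 : ∀ p i : ℤ,
      (0 < p ∧ Even p → Function.Bijective (d 0 p i)) ∧
      (¬(0 < p ∧ Even p) → d 0 p i = 0))
    (c : ∀ i : ℤ, C i (k - i)) (q : ℤ) (hq : q < 0) : DD d k c q = 0 := by
  rcases lt_or_ge q (-1) with h | h
  · rw [DD, Finset.Icc_eq_empty (by omega), Finset.sum_empty]
  · have hq1 : q = -1 := by omega
    subst hq1
    refine Finset.sum_eq_zero ?_
    intro j hj
    simp only [Finset.mem_Icc] at hj
    have hj0 : j = 0 := by omega
    have hz : d 0 (-1 + 1 - 0) (k - (-1 + 1 - 0)) = 0 := (hd0 _ _).2 (by norm_num)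
    refine (dcast (C:=C) d (j' := 0) (p' := -1 + 1 - 0) (q' := k - (-1 + 1 - 0)) hj0
      (by omega) (by omega) (by ring) (by ring) (by norm_num) (by norm_num) _ _ rfl).trans ?_
    have hz' : ∀ y : C (-1 + 1 - 0) (k - (-1 + 1 - 0)), d 0 (-1 + 1 - 0) (k - (-1 + 1 - 0)) y = 0 := by
      intro y; rw [hz]; rfl
    rw [hz', map_zero]

def FF (c : ∀ i : ℤ, C i (k - i)) (i s q : ℤ) : C (i - 1) (k - 1 - i) :=
  castC (C := C) (by ring) (by ring)
    (d q ((i + 1 - s) + (s - q) - 1) ((k - (i + 1 - s)) - (s - q))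
      (d (s - q) (i + 1 - s) (k - (i + 1 - s)) (c (i + 1 - s))))

theorem dsq
    (hrel : ∀ (j p i : ℤ) (x : C p i),
      ∑ q ∈ Finset.Icc (0 : ℤ) j,
        castC (C := C) (by ring) (by ring)
          (d q (p + (j - q) - 1) (i - (j - q)) (d (j - q) p i x)) =
        (0 : C (p + j - 2) (i - j)))
    (c : ∀ i : ℤ, C i (k - i)) (hcneg : ∀ i : ℤ, i < 0 → c i = 0) (i : ℤ) :
    ∑ j ∈ Finset.Icc (0:ℤ) (i + 1),
      castC (C := C) (by ring) (by ring)
        (d j (i - j) (k - 1 - (i - j)) (DD d k c (i - j))) = (0 : C (i - 1) (k - 1 - i)) := by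
  classical
  have hFzero : ∀ s q : ℤ, i + 1 < s → FF d k c i s q = 0 := by
    intro s q hs
    rw [FF, hcneg (i + 1 - s) (by omega)]
    simp
  have step1 : ∀ j ∈ Finset.Icc (0:ℤ) (i + 1),
      castC (C := C) (by ring) (by ring)
        (d j (i - j) (k - 1 - (i - j)) (DD d k c (i - j)))
        = ∑ l ∈ Finset.Icc (0:ℤ) (i + 1), FF d k c i (j + l) j := by
    intro j hj
    simp only [Finset.mem_Icc] at hj
    rw [DD, map_sum, map_sum]
    trans ∑ l ∈ Finset.Icc (0:ℤ) ((i - j) + 1), FF d k c i (j + l) j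
    · refine Finset.sum_congr rfl (fun l hl => ?_)
      rw [FF]
      refine dcast (C:=C) d rfl (by ring) (by ring) (by ring) (by ring) (by ring) (by ring)
        _ _ ?_
      refine (castC_castC (C:=C) _ _ _ _ _).trans ?_
      refine Eq.trans (dcast (C:=C) d (j' := (j + l) - j) (p' := i + 1 - (j + l))
        (q' := k - (i + 1 - (j + l))) (by ring) (by ring) (by ring) (by ring) (by ring)
        (by ring) (by ring) _ _ ?_) (castC_self _ _ _)
      exact castC_fn (C:=C) (f := fun n => n) (g := fun n => k - n) c (by ring) _ _
    · refine Finset.sum_subset (Finset.Icc_subset_Icc le_rfl (by omega)) ?_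
      intro l hl hnl
      simp only [Finset.mem_Icc] at hl hnl
      exact hFzero (j + l) j (by omega)
  rw [Finset.sum_congr rfl step1]
  rw [sum_triangle (i + 1) (fun j l => FF d k c i (j + l) j)
    (fun j l h0j h0l hN => hFzero (j + l) j (by omega))]
  refine Finset.sum_eq_zero ?_
  intro s hs
  simp only [Finset.mem_Icc] at hs
  have hc : ∀ q ∈ Finset.Icc (0:ℤ) s, FF d k c i (q + (s - q)) q = FF d k c i s q :=
    fun q hq => by rw [show q + (s - q) = s from by ring]
  rw [Finset.sum_congr rfl hc]
  have h0 := hrel s (i + 1 - s) (k - (i + 1 - s)) (c (i + 1 - s))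
  have h1 := congrArg (⇑(castC (C:=C)
    (show (i + 1 - s) + s - 2 = i - 1 by ring)
    (show (k - (i + 1 - s)) - s = k - 1 - i by ring))) h0
  rw [map_sum, map_zero] at h1
  rw [← h1]
  refine Finset.sum_congr rfl ?_
  intro q hq
  rw [FF, castC_castC]

end

section
variable {C : ℤ → ℤ → Type u} [∀ p i, AddCommGroup (C p i)]
  (d : ∀ j p i : ℤ, C p i →+ C (p + j - 1) (i - j)) (k : ℤ)

theorem bullet5
    (hd0 : ∀ p i : ℤ,
      (0 < p ∧ Even p → Function.Bijective (d 0 p i)) ∧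
      (¬(0 < p ∧ Even p) → d 0 p i = 0))
    (hrel : ∀ (j p i : ℤ) (x : C p i),
      ∑ q ∈ Finset.Icc (0 : ℤ) j,
        castC (C := C) (by ring) (by ring)
          (d q (p + (j - q) - 1) (i - (j - q)) (d (j - q) p i x)) =
        (0 : C (p + j - 2) (i - j)))
    (c : ∀ i : ℤ, C i (k - i)) (hcneg : ∀ i : ℤ, i < 0 → c i = 0)
    (hD4 : ∀ q : ℤ, 0 ≤ q → q ≤ k - 1 → Odd q → DD d k c q = 0)
    (i : ℤ) (h1 : 0 < i) (h2 : i ≤ k - 1) (h3 : Even i) :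
    d 0 i (k - 1 - i) (DD d k c i)
      = - ∑ q ∈ (Finset.Icc (0:ℤ) (i - 2)).filter (fun q => Even q),
          castC (C := C) (by ring) (by ring)
            (d (i - q) q (k - 1 - q) (DD d k c q)) := by
  classical
  have R := dsq d k hrel c hcneg i
  rw [Finset.Icc_eq_cons_Ioc (by omega), Finset.sum_cons] at R
  refine (castC (C:=C) (show i + 0 - 1 = i - 1 by ring)
    (show (k - 1 - i) - 0 = k - 1 - i by ring)).injective ?_
  have hL : castC (C:=C) (show i + 0 - 1 = i - 1 by ring)
      (show (k - 1 - i) - 0 = k - 1 - i by ring) (d 0 i (k - 1 - i) (DD d k c i))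
      = castC (C:=C) (by ring) (by ring) (d 0 (i - 0) (k - 1 - (i - 0)) (DD d k c (i - 0))) := by
    refine dcast (C:=C) d rfl (by ring) (by ring) (by ring) (by ring) (by ring) (by ring) _ _ ?_
    exact castC_fn (C:=C) (f := fun n => n) (g := fun n => k - 1 - n) (DD d k c) (by ring) _ _
  rw [hL, show castC (C:=C) (by ring : (i:ℤ) - 0 + 0 - 1 = i - 1)
      (by ring : (k - 1 - (i - 0)) - 0 = k - 1 - i) (d 0 (i - 0) (k - 1 - (i - 0)) (DD d k c (i - 0)))
      = - ∑ j ∈ Finset.Ioc (0:ℤ) (i + 1),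
          castC (C := C) (by ring) (by ring)
            (d j (i - j) (k - 1 - (i - j)) (DD d k c (i - j))) from by
    exact eq_neg_of_add_eq_zero_left R]
  rw [map_neg, map_sum, neg_inj]
  rw [show ∑ q ∈ (Finset.Icc (0:ℤ) (i - 2)).filter (fun q => Even q),
      castC (C:=C) (show i + 0 - 1 = i - 1 by ring) (show (k - 1 - i) - 0 = k - 1 - i by ring)
        (castC (C := C) (by ring) (by ring) (d (i - q) q (k - 1 - q) (DD d k c q)))
      = ∑ q ∈ (Finset.Icc (0:ℤ) (i - 2)).filter (fun q => Even q),
        castC (C := C) (by ring) (by ring) (d (i - q) q (k - 1 - q) (DD d k c q)) from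
    Finset.sum_congr rfl (fun q hq => castC_castC _ _ _ _ _)]
  rw [show ∑ j ∈ Finset.Ioc (0:ℤ) (i + 1),
      castC (C := C) (by ring) (by ring) (d j (i - j) (k - 1 - (i - j)) (DD d k c (i - j)))
      = ∑ j ∈ ((Finset.Icc (0:ℤ) (i - 2)).filter (fun q => Even q)).image (fun q => i - q),
        castC (C := C) (by ring) (by ring) (d j (i - j) (k - 1 - (i - j)) (DD d k c (i - j))) from
    (Finset.sum_subset (by
      intro j hj
      simp only [Finset.mem_image, Finset.mem_filter, Finset.mem_Icc, Finset.mem_Ioc] at hj ⊢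
      obtain ⟨q, ⟨⟨hq1, hq2⟩, _⟩, rfl⟩ := hj
      omega) (by
      intro j hj hnj
      simp only [Finset.mem_image, Finset.mem_filter, Finset.mem_Icc, Finset.mem_Ioc] at hj hnj
      rcases lt_or_ge (i - j) 0 with hneg | hpos
      · rw [DD_neg d k hd0 c _ hneg]; simp
      · rcases Int.even_or_odd (i - j) with he | ho
        · exfalso
          have hjev : Even j := by
            rcases h3 with ⟨a, ha⟩; rcases he with ⟨b, hb⟩
            exact ⟨a - b, by omega⟩
          rcases hjev with ⟨t, ht⟩
          exact hnj ⟨i - j, ⟨⟨hpos, by omega⟩, he⟩, by ring⟩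
        · rw [hD4 (i - j) hpos (by omega) ho]; simp)).symm]
  rw [Finset.sum_image (fun q _ q' _ h => by omega)]
  refine Finset.sum_congr rfl (fun q hq => ?_)
  refine dcast (C:=C) d rfl (by ring) (by ring) (by ring) (by ring) (by ring) (by ring) _ _ ?_
  exact castC_fn (C:=C) (f := fun n => n) (g := fun n => k - 1 - n) (DD d k c) (by ring) _ _

noncomputable def buildF (d : ∀ j p i : ℤ, C p i →+ C (p + j - 1) (i - j))
    (hd0 : ∀ p i : ℤ,
      (0 < p ∧ Even p → Function.Bijective (d 0 p i)) ∧
      (¬(0 < p ∧ Even p) → d 0 p i = 0))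
    (k : ℤ) (c0 : C 0 k) : (n : ℕ) → C (n : ℤ) (k - (n : ℤ))
  | n =>
    if h : 0 < (n : ℤ) ∧ (n : ℤ) ≤ k ∧ Even (n : ℤ) then
      (Equiv.ofBijective _ ((hd0 (n : ℤ) (k - (n : ℤ))).1 ⟨h.1, h.2.2⟩)).symm
        (- ∑ j ∈ Finset.Icc 1 n,
            if hj : 1 ≤ j ∧ j ≤ n then
              castC (C := C) (by omega) (by omega)
                (d (j : ℤ) ((n - j : ℕ) : ℤ) (k - ((n - j : ℕ) : ℤ)) (buildF d hd0 k c0 (n - j)))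
            else 0)
    else if h0 : n = 0 then castC (C := C) (by omega) (by omega) c0 else 0
  termination_by n => n
  decreasing_by omega

variable (d : ∀ j p i : ℤ, C p i →+ C (p + j - 1) (i - j))
  (hd0 : ∀ p i : ℤ,
      (0 < p ∧ Even p → Function.Bijective (d 0 p i)) ∧
      (¬(0 < p ∧ Even p) → d 0 p i = 0))
  (k : ℤ) (c0 : C 0 k)

theorem buildF_spec (n : ℕ) (h : 0 < (n : ℤ) ∧ (n : ℤ) ≤ k ∧ Even (n : ℤ)) :
    d 0 (n : ℤ) (k - (n : ℤ)) (buildF d hd0 k c0 n) =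
      - ∑ j ∈ Finset.Icc 1 n,
            if hj : 1 ≤ j ∧ j ≤ n then
              castC (C := C) (by omega) (by omega)
                (d (j : ℤ) ((n - j : ℕ) : ℤ) (k - ((n - j : ℕ) : ℤ)) (buildF d hd0 k c0 (n - j)))
            else 0 := by
  rw [buildF, dif_pos h]
  exact Equiv.apply_symm_apply (Equiv.ofBijective _ ((hd0 (n : ℤ) (k - (n : ℤ))).1 ⟨h.1, h.2.2⟩)) _

theorem buildF_zero (n : ℕ) (h : ¬(0 < (n : ℤ) ∧ (n : ℤ) ≤ k ∧ Even (n : ℤ))) (h0 : n ≠ 0) :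
    buildF d hd0 k c0 n = 0 := by
  rw [buildF, dif_neg h, dif_neg h0]

theorem buildF_at0 : buildF d hd0 k c0 0 = castC (C := C) (by omega) (by omega) c0 := by
  rw [buildF]; norm_num

theorem buildF_congr {n n' : ℕ} (h : n = n') (h1 : ((n:ℕ):ℤ) = (n':ℤ)) (h2 : k - (n:ℤ) = k - (n':ℤ)) :
    castC (C:=C) h1 h2 (buildF d hd0 k c0 n) = buildF d hd0 k c0 n' := by
  subst h; rfl

noncomputable def cE : ∀ i : ℤ, C i (k - i) := fun i =>
  if h : 0 ≤ i then
    castC (C := C) (Int.toNat_of_nonneg h) (by rw [Int.toNat_of_nonneg h])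
      (buildF d hd0 k c0 i.toNat)
  else 0

theorem cE_neg (i : ℤ) (h : i < 0) : cE d hd0 k c0 i = 0 := by
  rw [cE, dif_neg (by omega)]

theorem cE_big (i : ℤ) (hk : 0 ≤ k) (h : k < i) : cE d hd0 k c0 i = 0 := by
  rw [cE, dif_pos (by omega), buildF_zero d hd0 k c0 _ (by omega) (by omega), map_zero]

theorem cE_odd (i : ℤ) (h : Odd i) : cE d hd0 k c0 i = 0 := by
  rcases lt_or_ge i 0 with hi | hi
  · exact cE_neg d hd0 k c0 i hi
  · rw [cE, dif_pos hi, buildF_zero d hd0 k c0 _ ?_ ?_, map_zero]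
    · rw [Int.toNat_of_nonneg hi]
      rintro ⟨-, -, he⟩
      exact (Int.not_odd_iff_even.mpr he) h
    · rcases h with ⟨t, ht⟩
      omega

theorem cE_0 : cE d hd0 k c0 0 = castC (C := C) rfl (by ring) c0 := by
  rw [cE, dif_pos le_rfl]
  have h0 : buildF d hd0 k c0 ((0:ℤ).toNat) = castC (C := C) (by omega) (by omega) c0 :=
    buildF_at0 d hd0 k c0
  rw [h0, castC_castC]

theorem cE_spec (i : ℤ) (h1 : 0 < i) (h2 : i ≤ k) (h3 : Even i) :
    d 0 i (k - i) (cE d hd0 k c0 i) =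
      - ∑ j ∈ Finset.Icc (1:ℤ) i,
          castC (C := C) (by ring) (by ring)
            (d j (i - j) (k - (i - j)) (cE d hd0 k c0 (i - j))) := by
  have hn : ((i.toNat : ℕ) : ℤ) = i := Int.toNat_of_nonneg h1.le
  have hx : castC (C:=C) hn (by rw [hn]) (buildF d hd0 k c0 i.toNat) = cE d hd0 k c0 i := by
    rw [cE, dif_pos h1.le]
  have key := dcast (C:=C) d (j := 0) rfl hn (by rw [hn])
    (a := i + 0 - 1) (b := (k - i) - 0) (by omega) (by omega) (by omega) (by omega)
    _ _ hx
  rw [castC_self] at key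
  rw [← key, buildF_spec d hd0 k c0 i.toNat (by rw [hn]; exact ⟨h1, h2, h3⟩), map_neg, map_sum]
  congr 1
  refine Finset.sum_nbij' (fun j => (j : ℤ)) (fun j => j.toNat) ?_ ?_ ?_ ?_ ?_
  · intro j hj; simp only [Finset.mem_Icc] at hj ⊢; omega
  · intro j hj; simp only [Finset.mem_Icc] at hj ⊢; omega
  · intro j hj; simp only [Finset.mem_Icc] at hj; omega
  · intro j hj; simp only [Finset.mem_Icc] at hj; omega
  · intro j hj
    simp only [Finset.mem_Icc] at hj
    rw [dif_pos hj, castC_castC]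
    have hxx : castC (C:=C) (by omega) (by omega) (buildF d hd0 k c0 (i.toNat - j)) =
        cE d hd0 k c0 (i - (j:ℤ)) := by
      rw [cE, dif_pos (by omega)]
      rw [← buildF_congr d hd0 k c0 (show (i - (j:ℤ)).toNat = i.toNat - j by omega)
        (by omega) (by omega), castC_castC]
    exact dcast (C:=C) d rfl (by omega) (by omega) _ _ _ _ _ _ hxx


theorem cE_D4 (q : ℤ) (hq0 : 0 ≤ q) (hq1 : q ≤ k - 1) (hq2 : Odd q) :
    DD d k (cE d hd0 k c0) q = 0 := by
  classical
  have hIoc : Finset.Ioc (0:ℤ) (q + 1) = Finset.Icc (1:ℤ) (q + 1) := by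
    ext x; simp only [Finset.mem_Ioc, Finset.mem_Icc]; omega
  rw [DD, Finset.Icc_eq_cons_Ioc (by omega), Finset.sum_cons, hIoc]
  have heven : Even (q + 1) := by rcases hq2 with ⟨t, ht⟩; exact ⟨t + 1, by omega⟩
  have spec := cE_spec d hd0 k c0 (q + 1) (by omega) (by omega) heven
  have ht0 : castC (C := C) (by ring) (by ring)
      (d 0 (q + 1 - 0) (k - (q + 1 - 0)) (cE d hd0 k c0 (q + 1 - 0)))
      = castC (C := C) (by ring : (q:ℤ) + 1 + 0 - 1 = q)
          (by ring : (k - (q + 1)) - 0 = k - 1 - q)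
          (d 0 (q + 1) (k - (q + 1)) (cE d hd0 k c0 (q + 1))) := by
    refine dcast (C:=C) d rfl (by ring) (by ring) (by ring) (by ring) (by ring) (by ring) _ _ ?_
    exact castC_fn (C:=C) (f := fun n => n) (g := fun n => k - n) (cE d hd0 k c0) (by ring) _ _
  rw [ht0, spec, map_neg, map_sum]
  rw [show ∑ j ∈ Finset.Icc (1:ℤ) (q + 1),
      castC (C := C) (by ring : (q:ℤ) + 1 + 0 - 1 = q)
        (by ring : (k - (q + 1)) - 0 = k - 1 - q)
        (castC (C := C) (by ring) (by ring)
          (d j (q + 1 - j) (k - (q + 1 - j)) (cE d hd0 k c0 (q + 1 - j))))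
      = ∑ j ∈ Finset.Icc (1:ℤ) (q + 1),
        castC (C := C) (by ring) (by ring)
          (d j (q + 1 - j) (k - (q + 1 - j)) (cE d hd0 k c0 (q + 1 - j))) from
    Finset.sum_congr rfl (fun j hj => castC_castC _ _ _ _ _)]
  exact neg_add_cancel _

theorem index_congr (f g : ∀ i : ℤ, C i (k - i)) {n n' : ℤ} (h : n = n') (he : f n = g n) :
    f n' = g n' := by subst h; exact he

end

theorem canonical_embedding_exists_unique
    {C : ℤ → ℤ → Type u} [∀ p i, AddCommGroup (C p i)] (m : ℤ)
    (d : ∀ j p i : ℤ, C p i →+ C (p + j - 1) (i - j))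
    (hrange : ∀ j p i : ℤ, (j < 0 ∨ m < j) → d j p i = 0)
    (hrel : ∀ (j p i : ℤ) (x : C p i),
      ∑ q ∈ Finset.Icc (0 : ℤ) j,
        castC (C := C) (by ring) (by ring)
          (d q (p + (j - q) - 1) (i - (j - q)) (d (j - q) p i x)) =
        (0 : C (p + j - 2) (i - j)))
    (hd0 : ∀ p i : ℤ,
      (0 < p ∧ Even p → Function.Bijective (d 0 p i)) ∧
      (¬(0 < p ∧ Even p) → d 0 p i = 0)) :
    ∀ (k : ℤ) (c0 : C 0 k), 0 ≤ k →
      ∃! c : ∀ i : ℤ, C i (k - i),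
        c 0 = castC (C := C) rfl (by ring) c0 ∧
        (∀ i : ℤ, i < 0 ∨ k < i → c i = 0) ∧
        -- (1) `c_i = 0` for `i` odd
        (∀ i : ℤ, Odd i → c i = 0) ∧
        -- (2) on the components `d_i = ∑_{j=0}^{i+1} ∂_{[j]}(c_{i+1-j})` of `𝛛_k(c₀,…,c_k)`:
        (∀ i : ℤ, 0 ≤ i → i ≤ k - 1 → Odd i →
          (∑ j ∈ Finset.Icc (0 : ℤ) (i + 1),
            castC (C := C) (by ring) (by ring)
              (d j (i + 1 - j) (k - (i + 1 - j)) (c (i + 1 - j))) :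
            C i (k - 1 - i)) = 0) ∧
        (∀ i : ℤ, 0 < i → i ≤ k - 1 → Even i →
          d 0 i (k - 1 - i)
            ((∑ j ∈ Finset.Icc (0 : ℤ) (i + 1),
              castC (C := C) (by ring) (by ring)
                (d j (i + 1 - j) (k - (i + 1 - j)) (c (i + 1 - j))) :
              C i (k - 1 - i)))
          = - ∑ q ∈ (Finset.Icc (0 : ℤ) (i - 2)).filter (fun q => Even q),
              castC (C := C) (by ring) (by ring)
                (d (i - q) q (k - 1 - q)
                  ((∑ j ∈ Finset.Icc (0 : ℤ) (q + 1),
                    castC (C := C) (by ring) (by ring)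
                      (d j (q + 1 - j) (k - (q + 1 - j)) (c (q + 1 - j))) :
                    C q (k - 1 - q))))) := by
  intro k c0 hk
  refine ⟨cE d hd0 k c0, ⟨cE_0 d hd0 k c0, ?_, cE_odd d hd0 k c0, ?_, ?_⟩, ?_⟩
  · intro i hi
    rcases hi with hi | hi
    · exact cE_neg d hd0 k c0 i hi
    · exact cE_big d hd0 k c0 i hk hi
  · intro i h0 h1 h2
    exact cE_D4 d hd0 k c0 i h0 h1 h2
  · intro i h1 h2 h3
    exact bullet5 d k hd0 hrel (cE d hd0 k c0) (cE_neg d hd0 k c0) (cE_D4 d hd0 k c0) i h1 h2 h3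
  · rintro c' ⟨hc0, hrange', hodd', h4', -⟩
    have key : ∀ n : ℕ, ∀ i : ℤ, 0 ≤ i → i = (n : ℤ) → c' i = cE d hd0 k c0 i := by
      intro n
      induction n using Nat.strong_induction_on with
      | _ n IH =>
        intro i h0 hn
        rcases Int.even_or_odd i with he | ho
        · rcases eq_or_lt_of_le h0 with h00 | hpos
          · exact index_congr k c' (cE d hd0 k c0) h00
              (hc0.trans (cE_0 d hd0 k c0).symm)
          · by_cases hik : k < i
            · rw [hrange' i (Or.inr hik), cE_big d hd0 k c0 i hk hik]
            · -- 0 < i ≤ k, Even i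
              have hsplit : ∀ f : ∀ i : ℤ, C i (k - i), DD d k f (i - 1)
                  = castC (C := C) (by ring) (by ring)
                      (d 0 (i - 1 + 1 - 0) (k - (i - 1 + 1 - 0)) (f (i - 1 + 1 - 0)))
                    + ∑ j ∈ Finset.Ioc (0:ℤ) (i - 1 + 1),
                        castC (C := C) (by ring) (by ring)
                          (d j (i - 1 + 1 - j) (k - (i - 1 + 1 - j)) (f (i - 1 + 1 - j))) := by
                intro f
                rw [DD, Finset.Icc_eq_cons_Ioc (by omega), Finset.sum_cons]
              have HA : DD d k c' (i - 1) = 0 :=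
                h4' (i - 1) (by omega) (by omega) (by rcases he with ⟨t, ht⟩; exact ⟨t - 1, by omega⟩)
              have HB : DD d k (cE d hd0 k c0) (i - 1) = 0 :=
                cE_D4 d hd0 k c0 (i - 1) (by omega) (by omega)
                  (by rcases he with ⟨t, ht⟩; exact ⟨t - 1, by omega⟩)
              rw [hsplit c'] at HA
              rw [hsplit (cE d hd0 k c0)] at HB
              have hS : (∑ j ∈ Finset.Ioc (0:ℤ) (i - 1 + 1),
                    castC (C := C) (by ring) (by ring)
                      (d j (i - 1 + 1 - j) (k - (i - 1 + 1 - j)) (c' (i - 1 + 1 - j)))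
                      : C (i - 1) (k - 1 - (i - 1)))
                  = ∑ j ∈ Finset.Ioc (0:ℤ) (i - 1 + 1),
                      castC (C := C) (by ring) (by ring)
                        (d j (i - 1 + 1 - j) (k - (i - 1 + 1 - j))
                          (cE d hd0 k c0 (i - 1 + 1 - j))) := by
                refine Finset.sum_congr rfl (fun j hj => ?_)
                simp only [Finset.mem_Ioc] at hj
                have hcc : c' (i - 1 + 1 - j) = cE d hd0 k c0 (i - 1 + 1 - j) := by
                  rcases lt_or_ge (i - 1 + 1 - j) 0 with hneg | hge
                  · rw [hrange' _ (Or.inl hneg), cE_neg d hd0 k c0 _ hneg]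
                  · exact IH (i - 1 + 1 - j).toNat (by omega) _ hge (by omega)
                rw [hcc]
              rw [hS] at HA
              have h00 : castC (C := C)
                    (by ring : (i:ℤ) - 1 + 1 - 0 + 0 - 1 = i - 1)
                    (by ring : (k - (i - 1 + 1 - 0)) - 0 = k - 1 - (i - 1))
                  (d 0 (i - 1 + 1 - 0) (k - (i - 1 + 1 - 0)) (c' (i - 1 + 1 - 0)))
                  = castC (C := C)
                    (by ring : (i:ℤ) - 1 + 1 - 0 + 0 - 1 = i - 1)
                    (by ring : (k - (i - 1 + 1 - 0)) - 0 = k - 1 - (i - 1))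
                    (d 0 (i - 1 + 1 - 0) (k - (i - 1 + 1 - 0))
                      (cE d hd0 k c0 (i - 1 + 1 - 0))) :=
                (eq_neg_of_add_eq_zero_left HA).trans (eq_neg_of_add_eq_zero_left HB).symm
              have h01 := (castC (C := C) (by ring : (i:ℤ) - 1 + 1 - 0 + 0 - 1 = i - 1)
                (by ring : (k - (i - 1 + 1 - 0)) - 0 = k - 1 - (i - 1))).injective h00
              have hbij : Function.Bijective (d 0 (i - 1 + 1 - 0) (k - (i - 1 + 1 - 0))) :=
                (hd0 _ _).1 ⟨by omega, by rcases he with ⟨t, ht⟩; exact ⟨t, by omega⟩⟩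
              exact index_congr k c' (cE d hd0 k c0) (by ring : (i:ℤ) - 1 + 1 - 0 = i)
                (hbij.injective h01)
        · rw [hodd' i ho, cE_odd d hd0 k c0 i ho]
    funext i
    rcases lt_or_ge i 0 with h | h
    · rw [hrange' i (Or.inl h), cE_neg d hd0 k c0 i h]
    · exact key i.toNat i h (by omega)
end

section
/- Under the same hypotheses, the chain map $\Phi_\#$ induces an isomorphism in homology: $H_k(\mathcal{C}_0(B_*), \partial_{[1]}) \cong H_k(\mathrm{CB}_*, \boldsymbol{\partial}_*)$ for every $k$. In particular, the Morse-Smale-Witten chain complex of a Morse-Smale function is quasi-isomorphic to its Morse-Bott-Smale chain complex. -/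
open DirectSum

section

variable {C : ℤ → ℤ → Type u} [∀ p i, AddCommGroup (C p i)]

/-- The degree-`k` part `CB_k = ⨁_i 𝒞_{k-i}(B_i)` of the total complex. -/
abbrev TotalCB (C : ℤ → ℤ → Type u) [∀ p i, AddCommGroup (C p i)] (k : ℤ) :
    Type u :=
  ⨁ i : ℤ, C (k - i) i

/-- Transport along an equality of total degrees. -/
def castCB {a b : ℤ} (h : a = b) : TotalCB C a ≃+ TotalCB C b := by
  subst h; exact AddEquiv.refl _

/-- The total differential `𝛛_k : CB_k → CB_{k-1}`. -/
noncomputable def totalBoundary (m : ℤ)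
    (d : ∀ j p i : ℤ, C p i →+ C (p + j - 1) (i - j)) (k : ℤ) :
    TotalCB C k →+ TotalCB C (k - 1) :=
  DirectSum.toAddMonoid fun i =>
    ∑ j ∈ Finset.Icc (0 : ℤ) m,
      (DirectSum.of (fun i' : ℤ => C (k - 1 - i') i') (i - j)).comp
        ((castC (C := C) (by ring) rfl).toAddMonoidHom.comp (d j (k - i) i))

/-- The Morse differential `∂_{[1]} : 𝒞_0(B_i) → 𝒞_0(B_{i-1})`. -/
noncomputable def morseBoundary
    (d : ∀ j p i : ℤ, C p i →+ C (p + j - 1) (i - j)) (i : ℤ) :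
    C 0 i →+ C 0 (i - 1) :=
  (castC (C := C) (by ring) rfl).toAddMonoidHom.comp (d 1 0 i)

/-- Homology of the Morse complex `(𝒞_0(B_*), ∂_{[1]})` in degree `k`. -/
abbrev morseHomology (d : ∀ j p i : ℤ, C p i →+ C (p + j - 1) (i - j)) (k : ℤ) :
    Type u :=
  (morseBoundary d k).ker ⧸
    ((((castC (C := C) rfl (show k + 1 - 1 = k by ring)).toAddMonoidHom.comp
        (morseBoundary d (k + 1))).range).addSubgroupOf (morseBoundary d k).ker)

/-- Homology of the total (Morse--Bott--Smale) complex in degree `k`. -/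
abbrev totalHomology (m : ℤ)
    (d : ∀ j p i : ℤ, C p i →+ C (p + j - 1) (i - j)) (k : ℤ) : Type u :=
  (totalBoundary m d k).ker ⧸
    ((((castCB (C := C) (show k + 1 - 1 = k by ring)).toAddMonoidHom.comp
        (totalBoundary m d (k + 1))).range).addSubgroupOf
      (totalBoundary m d k).ker)

end

namespace MQI
section
variable {C : ℤ → ℤ → Type u} [∀ p i, AddCommGroup (C p i)]

theorem castC_castC {a a' a'' b b' b'' : ℤ} (h1 : a = a') (h2 : b = b')
    (h1' : a' = a'') (h2' : b' = b'') (x : C a b) :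
    castC (C := C) h1' h2' (castC h1 h2 x) = castC (h1.trans h1') (h2.trans h2') x := by
  subst h1 h2 h1' h2'; rfl

theorem castC_eq_zero_iff {a a' b b' : ℤ} (h1 : a = a') (h2 : b = b') (x : C a b) :
    castC (C := C) h1 h2 x = 0 ↔ x = 0 := by subst h1 h2; rfl

variable (d : ∀ j p i : ℤ, C p i →+ C (p + j - 1) (i - j))

noncomputable def D2 (j p i p' i' : ℤ) (h1 : p + j - 1 = p') (h2 : i - j = i') :
    C p i →+ C p' i' :=
  (castC (C := C) h1 h2).toAddMonoidHom.comp (d j p i)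

theorem D2_castC (j p i p' i' P I : ℤ) (h1 : P + j - 1 = p') (h2 : I - j = i')
    (hp : p = P) (hi : i = I) (h1' : p + j - 1 = p') (h2' : i - j = i') (x : C p i) :
    D2 d j P I p' i' h1 h2 (castC hp hi x) = D2 d j p i p' i' h1' h2' x := by
  subst hp hi; rfl

theorem castC_D2 (j p i p' i' P' I' : ℤ) (h1 : p + j - 1 = p') (h2 : i - j = i')
    (hp : p' = P') (hi : i' = I') (h1' : p + j - 1 = P') (h2' : i - j = I') (x : C p i) :
    castC (C := C) hp hi (D2 d j p i p' i' h1 h2 x) = D2 d j p i P' I' h1' h2' x := by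
  subst hp hi; rfl

theorem D2_apply (j p i p' i' : ℤ) (h1 : p + j - 1 = p') (h2 : i - j = i') (x : C p i) :
    D2 d j p i p' i' h1 h2 x = castC (C := C) h1 h2 (d j p i x) := rfl

theorem D2_congr_j {j j' : ℤ} (hj : j = j') (p i p' i' : ℤ) (h1 : p + j - 1 = p')
    (h2 : i - j = i') (h1' : p + j' - 1 = p') (h2' : i - j' = i') (x : C p i) :
    D2 d j p i p' i' h1 h2 x = D2 d j' p i p' i' h1' h2' x := by
  subst hj; rfl

/-- the component family of the total complex in degree `a`. -/
abbrev CBf (a : ℤ) : ℤ → Type u := fun i => C (a - i) i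

theorem of_congr (a : ℤ) {i i' : ℤ} (hi : i = i') (h1 : a - i = a - i') (x : C (a - i) i) :
    DirectSum.of (CBf (C := C) a) i x = DirectSum.of (CBf (C := C) a) i' (castC h1 hi x) := by
  subst hi; rfl

variable (m : ℤ)

/-- the `d₀`-part of the total boundary. -/
noncomputable def Aop (a b : ℤ) (h : b = a - 1) : TotalCB C a →+ TotalCB C b :=
  DirectSum.toAddMonoid fun i =>
    (DirectSum.of (CBf (C := C) b) i).comp
      (D2 d 0 (a - i) i (b - i) i (by omega) (by omega))

/-- the `d_{[≥1]}`-part of the total boundary. -/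
noncomputable def Bop (a b : ℤ) (h : b = a - 1) : TotalCB C a →+ TotalCB C b :=
  DirectSum.toAddMonoid fun i =>
    ∑ j ∈ Finset.Icc (1 : ℤ) m,
      (DirectSum.of (CBf (C := C) b) (i - j)).comp
        (D2 d j (a - i) i (b - (i - j)) (i - j) (by omega) rfl)

/-- the total boundary with flexible degrees. -/
noncomputable def Dop (a b : ℤ) (h : b = a - 1) : TotalCB C a →+ TotalCB C b :=
  (castCB (C := C) (show a - 1 = b by omega)).toAddMonoidHom.comp (totalBoundary m d a)

noncomputable def iOp (a : ℤ) : C 0 a →+ TotalCB C a :=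
  (DirectSum.of (CBf (C := C) a) a).comp (castC (show (0:ℤ) = a - a by ring) rfl).toAddMonoidHom

noncomputable def pOp (a : ℤ) : TotalCB C a →+ C 0 a :=
  DirectSum.toAddMonoid fun i =>
    if h : i = a then (castC (show a - i = 0 by omega) h).toAddMonoidHom else 0

noncomputable def mB (a b : ℤ) (h : b = a - 1) : C 0 a →+ C 0 b :=
  (castC (C := C) rfl (show a - 1 = b by omega)).toAddMonoidHom.comp (morseBoundary d a)

-- component computations
theorem Aop_of (a b : ℤ) (h : b = a - 1) (i : ℤ) (x : C (a - i) i) :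
    Aop d a b h (DirectSum.of (CBf (C := C) a) i x) =
      DirectSum.of (CBf (C := C) b) i (D2 d 0 (a - i) i (b - i) i (by omega) (by omega) x) := by
  simp [Aop, DirectSum.toAddMonoid_of]

theorem Bop_of (a b : ℤ) (h : b = a - 1) (i : ℤ) (x : C (a - i) i) :
    Bop d m a b h (DirectSum.of (CBf (C := C) a) i x) =
      ∑ j ∈ Finset.Icc (1 : ℤ) m, DirectSum.of (CBf (C := C) b) (i - j)
        (D2 d j (a - i) i (b - (i - j)) (i - j) (by omega) rfl x) := by
  simp [Bop, DirectSum.toAddMonoid_of, AddMonoidHom.finset_sum_apply]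

theorem pOp_of_same (a : ℤ) (x : C (a - a) a) :
    pOp (C := C) a (DirectSum.of (CBf (C := C) a) a x) =
      castC (show a - a = 0 by omega) rfl x := by
  simp [pOp, DirectSum.toAddMonoid_of]

theorem pOp_of_ne (a i : ℤ) (hi : i ≠ a) (x : C (a - i) i) :
    pOp (C := C) a (DirectSum.of (CBf (C := C) a) i x) = 0 := by
  simp [pOp, DirectSum.toAddMonoid_of, hi]

theorem iOp_apply (a : ℤ) (c : C 0 a) :
    iOp (C := C) a c = DirectSum.of (CBf (C := C) a) a (castC (show (0:ℤ) = a - a by ring) rfl c) := rfl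

theorem pOp_iOp (a : ℤ) (c : C 0 a) : pOp (C := C) a (iOp a c) = c := by
  rw [iOp_apply, pOp_of_same, castC_castC]; rfl

theorem castCB_of (a b : ℤ) (h : a = b) (i : ℤ) (x : C (a - i) i) :
    castCB (C := C) h (DirectSum.of (CBf (C := C) a) i x) =
      DirectSum.of (CBf (C := C) b) i (castC (by rw [h]) rfl x) := by
  subst h; rfl

theorem Icc_zero_eq (hm : 0 ≤ m) : Finset.Icc (0 : ℤ) m = insert 0 (Finset.Icc 1 m) := by
  ext x; simp [Finset.mem_Icc, Finset.mem_insert]; omega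

theorem Dop_of (hm : 0 ≤ m) (a b : ℤ) (h : b = a - 1) (i : ℤ) (x : C (a - i) i) :
    Dop d m a b h (DirectSum.of (CBf (C := C) a) i x) =
      ∑ j ∈ Finset.Icc (0 : ℤ) m, DirectSum.of (CBf (C := C) b) (i - j)
        (D2 d j (a - i) i (b - (i - j)) (i - j) (by omega) rfl x) := by
  subst h
  rw [Dop]
  simp only [AddMonoidHom.coe_comp, Function.comp_apply, totalBoundary,
    DirectSum.toAddMonoid_of, AddMonoidHom.finset_sum_apply, AddEquiv.toAddMonoidHom_eq_coe,
    AddMonoidHom.coe_coe]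
  rfl

/-- E0 : the total boundary is the sum of the `A` and `B` parts. -/
theorem Dop_eq (hm : 0 ≤ m) (a b : ℤ) (h : b = a - 1) (x : TotalCB C a) :
    Dop d m a b h x = Aop d a b h x + Bop d m a b h x := by
  induction x using DirectSum.induction_on with
  | zero => simp
  | of i x =>
    rw [Dop_of d m hm a b h, Aop_of d a b h, Bop_of d m a b h,
      Icc_zero_eq m hm, Finset.sum_insert (by simp)]
    congr 1
    rw [of_congr (C := C) b (show i - 0 = i by ring) (by omega)]
    congr 1
    rw [D2, D2]
    simp only [AddMonoidHom.coe_comp, Function.comp_apply, AddEquiv.toAddMonoidHom_eq_coe,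
      AddMonoidHom.coe_coe]
    rw [castC_castC]
  | add x y hx hy => simp [map_add, hx, hy]; abel

variable (hd0 : ∀ p i : ℤ,
      (0 < p ∧ Even p → Function.Bijective (d 0 p i)) ∧
      (¬(0 < p ∧ Even p) → d 0 p i = 0))

/-- `d₀` as an equivalence on positive even rows. -/
noncomputable def d0equiv (q i q' : ℤ) (hq : 0 < q ∧ Even q) (h1 : q + 0 - 1 = q') :
    C q i ≃+ C q' i :=
  AddEquiv.ofBijective (D2 d 0 q i q' i h1 (by ring))
    (by
      have hb := (hd0 q i).1 hq
      have hc : Function.Bijective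
          ⇑(castC (C := C) h1 (show i - (0:ℤ) = i by ring)) := (castC _ _).bijective
      rw [D2]
      simp only [AddMonoidHom.coe_comp, AddEquiv.toAddMonoidHom_eq_coe, AddMonoidHom.coe_coe]
      exact hc.comp hb)

open Classical in
/-- the inverse of `d₀` on odd positive rows (and `0` elsewhere). -/
noncomputable def hinv (q i q' : ℤ) (h : q' = q + 1) : C q i →+ C q' i :=
  if hq : Odd q ∧ 0 < q then
    (d0equiv d hd0 q' i q
      ⟨by omega, by rw [h]; exact Int.even_add_one.mpr (Int.not_even_iff_odd.mpr hq.1)⟩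
      (by omega)).symm.toAddMonoidHom
  else 0

theorem hinv_zero (q i q' : ℤ) (h : q' = q + 1) (hq : ¬(Odd q ∧ 0 < q)) :
    hinv d hd0 q i q' h = 0 := by
  rw [hinv, dif_neg hq]

theorem D2_hinv (q i q' : ℤ) (h : q' = q + 1) (hq : Odd q ∧ 0 < q)
    (h1 : q' + 0 - 1 = q) (h2 : i - 0 = i) (x : C q i) :
    D2 d 0 q' i q i h1 h2 (hinv d hd0 q i q' h x) = x := by
  rw [hinv, dif_pos hq]
  exact (d0equiv d hd0 q' i q _ _).apply_symm_apply x

theorem hinv_D2 (p i v : ℤ) (hp : 0 < p ∧ Even p) (h1 : p + 0 - 1 = v) (h2 : i - 0 = i)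
    (hq' : p = v + 1) (x : C p i) :
    hinv d hd0 v i p hq' (D2 d 0 p i v i h1 h2 x) = x := by
  have hv : Odd v ∧ 0 < v := by
    constructor
    · refine Int.not_even_iff_odd.mp (fun he => ?_)
      have : Even (v + 1) := by rw [← hq']; exact hp.2
      exact (Int.even_add_one.mp this) he
    · by_contra hc
      have : p = 1 ∨ p ≤ 0 := by omega
      rcases this with h' | h'
      · rw [h'] at hp; exact (by decide : ¬ Even (1:ℤ)) hp.2
      · omega
  rw [hinv, dif_pos hv]
  exact (d0equiv d hd0 p i v _ _).symm_apply_apply x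

/-- row-raising homotopy. -/
noncomputable def Hop (a u : ℤ) (hu : u = a + 1) : TotalCB C a →+ TotalCB C u :=
  DirectSum.toAddMonoid fun i =>
    (DirectSum.of (CBf (C := C) u) i).comp (hinv d hd0 (a - i) i (u - i) (by omega))

theorem Hop_of (a u : ℤ) (hu : u = a + 1) (i : ℤ) (x : C (a - i) i) :
    Hop d hd0 a u hu (DirectSum.of (CBf (C := C) a) i x) =
      DirectSum.of (CBf (C := C) u) i (hinv d hd0 (a - i) i (u - i) (by omega) x) := by
  simp [Hop, DirectSum.toAddMonoid_of]

theorem d_congr {j j' : ℤ} (hj : j = j') (p i : ℤ) (x : C p i) :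
    d j' p i x = castC (by rw [hj]) (by rw [hj]) (d j p i x) := by subst hj; rfl

theorem d_castC (j p i P I : ℤ) (hp : p = P) (hi : i = I) (x : C p i) :
    d j P I (castC hp hi x) = castC (by rw [hp]) (by rw [hi]) (d j p i x) := by
  subst hp hi; rfl

theorem D2_zero (j p i p' i' : ℤ) (h1 : p + j - 1 = p') (h2 : i - j = i')
    (hd : d j p i = 0) (x : C p i) : D2 d j p i p' i' h1 h2 x = 0 := by
  simp [D2, hd]

include hd0 in
theorem d0_zero (p i : ℤ) (hp : p % 2 = 1 ∨ p ≤ 0) : d 0 p i = 0 :=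
  (hd0 p i).2 (fun hc => by rw [Int.even_iff] at hc; omega)

include hd0 in
/-- E1 -/
theorem Aop_iOp (a b : ℤ) (h : b = a - 1) (c : C 0 a) :
    Aop d a b h (iOp a c) = 0 := by
  rw [iOp_apply, Aop_of d a b h,
    D2_castC d 0 0 a (b - a) a (a - a) a (by omega) (by omega) (by ring) rfl (by omega) (by omega),
    D2_zero d 0 0 a (b - a) a _ _ (d0_zero d hd0 0 a (by omega)), map_zero]

include hd0 in
/-- E2 -/
theorem pOp_Aop (a b : ℤ) (h : b = a - 1) (x : TotalCB C a) :
    pOp b (Aop d a b h x) = 0 := by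
  induction x using DirectSum.induction_on with
  | zero => simp
  | of i y =>
    rw [Aop_of d a b h]
    rcases eq_or_ne i b with hib | hne
    · subst hib
      rw [pOp_of_same,
        castC_D2 d 0 (a - i) i (i - i) i 0 i (by omega) (by omega) (by omega) rfl
          (by omega) (by omega),
        D2_zero d 0 (a - i) i 0 i _ _ (d0_zero d hd0 (a - i) i (by omega))]
    · rw [pOp_of_ne b i hne]
  | add x y hx hy => simp [map_add, hx, hy]

/-- E7 -/
theorem pOp_Hop (a u : ℤ) (hu : u = a + 1) (x : TotalCB C a) :
    pOp u (Hop d hd0 a u hu x) = 0 := by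
  induction x using DirectSum.induction_on with
  | zero => simp
  | of i y =>
    rw [Hop_of]
    rcases eq_or_ne i u with hib | hne
    · subst hib
      rw [hinv_zero d hd0 (a - i) i (i - i) (by omega) (by intro hc; omega),
        AddMonoidHom.zero_apply, map_zero, map_zero]
    · rw [pOp_of_ne u i hne]
  | add x y hx hy => simp [map_add, hx, hy]

/-- E5 -/
theorem pOp_Bop_Hop (t u : ℤ) (hu : u = t + 1) (h : t = u - 1) (x : TotalCB C t) :
    pOp t (Bop d m u t h (Hop d hd0 t u hu x)) = 0 := by
  induction x using DirectSum.induction_on with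
  | zero => simp
  | of i y =>
    rw [Hop_of]
    rcases le_or_gt i t with hle | hlt
    · rw [Bop_of, map_sum]
      refine Finset.sum_eq_zero (fun j hj => ?_)
      have hj1 : 1 ≤ j := (Finset.mem_Icc.mp hj).1
      rw [pOp_of_ne t (i - j) (by omega)]
    · rw [hinv_zero d hd0 (t - i) i (u - i) (by omega) (by intro hc; omega),
        AddMonoidHom.zero_apply, map_zero, map_zero, map_zero]
  | add x y hx hy => simp [map_add, hx, hy]

/-- E6 -/
theorem pOp_Bop_iOp (hm : 0 ≤ m) (hrange : ∀ j p i : ℤ, (j < 0 ∨ m < j) → d j p i = 0)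
    (a b : ℤ) (h : b = a - 1) (c : C 0 a) :
    pOp b (Bop d m a b h (iOp a c)) = mB d a b h c := by
  subst h
  rw [iOp_apply, Bop_of, map_sum]
  rw [Finset.sum_eq_single 1 ?h0 ?h1]
  · rw [pOp_of_same,
      D2_castC d 1 0 a (a - 1 - (a - 1)) (a - 1) (a - a) a (by omega) (by omega) (by ring) rfl
        (by omega) (by omega),
      D2_apply, castC_castC, mB]
    simp only [AddMonoidHom.coe_comp, Function.comp_apply, AddEquiv.toAddMonoidHom_eq_coe,
      AddMonoidHom.coe_coe, morseBoundary]
    rw [castC_castC]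
  case h0 =>
    intro j hj hne
    rw [pOp_of_ne (a-1) (a - j) (by omega)]
  case h1 =>
    intro h1
    have hm1 : m < 1 := by
      by_contra hc
      exact h1 (Finset.mem_Icc.mpr ⟨le_refl 1, by omega⟩)
    rw [D2_zero d 1 (a - a) a (a - 1 - (a - 1)) (a - 1) (by omega) rfl
      (hrange 1 (a - a) a (Or.inr hm1)), map_zero, map_zero]

/-- E3 : the fundamental homotopy identity -/
theorem homotopy_id (htriv : ∀ p i : ℤ, (p < 0 ∨ i < 0 ∨ m < i) → Subsingleton (C p i))
    (t u v : ℤ) (hu : u = t + 1) (hv : v = t - 1) (x : TotalCB C t) :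
    Aop d u t (by omega) (Hop d hd0 t u hu x) + Hop d hd0 v t (by omega) (Aop d t v hv x)
      = x - iOp t (pOp t x) := by
  induction x using DirectSum.induction_on with
  | zero => simp
  | of i y =>
    rw [Hop_of, Aop_of d u t, Aop_of d t v hv, Hop_of]
    rcases eq_or_ne i t with hib | hne
    · subst hib
      rw [hinv_zero d hd0 (i - i) i (u - i) (by omega) (by intro hc; omega),
        hinv_zero d hd0 (v - i) i (i - i) (by omega) (by intro hc; omega)]
      rw [pOp_of_same, iOp_apply, castC_castC]
      simp only [AddMonoidHom.zero_apply, map_zero, zero_add]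
      exact (sub_self _).symm
    · rw [pOp_of_ne t i hne, map_zero]
      simp only [sub_zero]
      rcases lt_trichotomy (t - i) 0 with hq | hq | hq
      · haveI := htriv (t - i) i (Or.inl hq)
        have hy : y = 0 := Subsingleton.elim y 0
        subst hy
        simp
      · omega
      · rcases Int.even_or_odd (t - i) with he | ho
        · rw [hinv_zero d hd0 (t - i) i (u - i) (by omega)
            (by intro hc; exact (Int.not_even_iff_odd.mpr hc.1) he)]
          simp only [AddMonoidHom.zero_apply, map_zero, zero_add]
          exact congrArg _ (hinv_D2 d hd0 (t - i) i (v - i) ⟨hq, he⟩ _ _ (by omega) y)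
        · rw [D2_zero d 0 (t - i) i (v - i) i _ _
            (d0_zero d hd0 (t - i) i (Or.inl (Int.odd_iff.mp ho))), map_zero, map_zero, add_zero]
          exact congrArg _ (D2_hinv d hd0 (t - i) i (u - i) (by omega) ⟨ho, hq⟩ _ _ y)
  | add x y hx hy =>
    calc Aop d u t (by omega) (Hop d hd0 t u hu (x + y))
          + Hop d hd0 v t (by omega) (Aop d t v hv (x + y))
        = (Aop d u t (by omega) (Hop d hd0 t u hu x)
            + Hop d hd0 v t (by omega) (Aop d t v hv x))
          + (Aop d u t (by omega) (Hop d hd0 t u hu y)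
            + Hop d hd0 v t (by omega) (Aop d t v hv y)) := by
          simp only [map_add]; abel
      _ = (x - iOp t (pOp t x)) + (y - iOp t (pOp t y)) := by rw [hx, hy]
      _ = (x + y) - iOp t (pOp t (x + y)) := by simp only [map_add]; abel

theorem D2_D2 (t q p i p1 i1 p2 i2 : ℤ)
    (ha : p + (t - q) - 1 = p1) (hb : i - (t - q) = i1)
    (hc : p1 + q - 1 = p2) (hd : i1 - q = i2)
    (h1 : p + t - 2 = p2) (h2 : i - t = i2) (x : C p i) :
    D2 d q p1 i1 p2 i2 hc hd (D2 d (t - q) p i p1 i1 ha hb x) =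
      castC h1 h2 (castC (by ring) (by ring)
        (d q (p + (t - q) - 1) (i - (t - q)) (d (t - q) p i x))) := by
  subst ha hb hc hd
  rw [D2_apply, D2_apply]
  conv_rhs => rw [castC_castC]
  rfl

/-- E8 : `A ∘ A = 0`. -/
theorem Aop_Aop (hrel : ∀ (j p i : ℤ) (x : C p i),
      ∑ q ∈ Finset.Icc (0 : ℤ) j,
        castC (C := C) (by ring) (by ring)
          (d q (p + (j - q) - 1) (i - (j - q)) (d (j - q) p i x)) =
        (0 : C (p + j - 2) (i - j)))
    (a b c' : ℤ) (h1 : b = a - 1) (h2 : c' = b - 1) (x : TotalCB C a) :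
    Aop d b c' h2 (Aop d a b h1 x) = 0 := by
  induction x using DirectSum.induction_on with
  | zero => simp
  | of i y =>
    rw [Aop_of d a b h1, Aop_of d b c' h2]
    have key := hrel 0 (a - i) i y
    rw [Finset.Icc_self, Finset.sum_singleton] at key
    rw [D2_congr_j d (show (0:ℤ) = 0 - 0 by ring) (a - i) i (b - i) i (by omega) (by omega)
      (by omega) (by omega)]
    rw [D2_D2 d 0 0 (a - i) i (b - i) i (c' - i) i (by omega) (by omega) (by omega) (by omega)
      (by omega) (by omega) y]
    rw [key, map_zero, map_zero]
  | add x y hx hy => simp [map_add, hx, hy]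

/-- E9 : `D ∘ D = 0`. -/
theorem Dop_Dop (hm : 0 ≤ m)
    (hrange : ∀ j p i : ℤ, (j < 0 ∨ m < j) → d j p i = 0)
    (hrel : ∀ (j p i : ℤ) (x : C p i),
      ∑ q ∈ Finset.Icc (0 : ℤ) j,
        castC (C := C) (by ring) (by ring)
          (d q (p + (j - q) - 1) (i - (j - q)) (d (j - q) p i x)) =
        (0 : C (p + j - 2) (i - j)))
    (a b c' : ℤ) (h1 : b = a - 1) (h2 : c' = b - 1) (x : TotalCB C a) :
    Dop d m b c' h2 (Dop d m a b h1 x) = 0 := by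
  induction x using DirectSum.induction_on with
  | zero => simp
  | of i y =>
    rw [Dop_of d m hm a b h1, map_sum]
    classical
    -- rewrite into a double sum of G
    set G : ℤ → ℤ → TotalCB C c' := fun j q =>
      DirectSum.of (CBf (C := C) c') (i - j - q)
        (D2 d q (b - (i - j)) (i - j) (c' - (i - j - q)) (i - j - q) (by omega) rfl
          (D2 d j (a - i) i (b - (i - j)) (i - j) (by omega) rfl y)) with hG
    have hGz : ∀ j q : ℤ, (j < 0 ∨ m < j ∨ q < 0 ∨ m < q) → G j q = 0 := by
      intro j q hjq
      rw [hG]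
      rcases hjq with hj | hj | hj | hj
      · simp only
        rw [D2_zero d j _ _ _ _ _ _ (hrange j (a - i) i (Or.inl hj)), map_zero, map_zero]
      · simp only
        rw [D2_zero d j _ _ _ _ _ _ (hrange j (a - i) i (Or.inr hj)), map_zero, map_zero]
      · simp only
        rw [D2_zero d q _ _ _ _ _ _ (hrange q (b - (i - j)) (i - j) (Or.inl hj)), map_zero]
      · simp only
        rw [D2_zero d q _ _ _ _ _ _ (hrange q (b - (i - j)) (i - j) (Or.inr hj)), map_zero]
    have hstep : ∀ j ∈ Finset.Icc (0:ℤ) m,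
        Dop d m b c' h2 (DirectSum.of (CBf (C := C) b) (i - j)
          (D2 d j (a - i) i (b - (i - j)) (i - j) (by omega) rfl y)) =
        ∑ q ∈ Finset.Icc (0:ℤ) m, G j q := by
      intro j hj
      rw [Dop_of d m hm b c' h2]
    rw [Finset.sum_congr rfl hstep]
    -- the diagonal sums vanish
    have hdiag : ∀ t : ℤ, ∑ q ∈ Finset.Icc (0:ℤ) t, G (t - q) q = 0 := by
      intro t
      have key := hrel t (a - i) i y
      calc ∑ q ∈ Finset.Icc (0:ℤ) t, G (t - q) q
          = ∑ q ∈ Finset.Icc (0:ℤ) t,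
              ((DirectSum.of (CBf (C := C) c') (i - t)).comp
                (castC (C := C) (show (a - i) + t - 2 = c' - (i - t) by omega)
                  (show i - t = i - t from rfl)).toAddMonoidHom)
              (castC (C := C) (by ring) (by ring)
                (d q ((a - i) + (t - q) - 1) (i - (t - q)) (d (t - q) (a - i) i y))) := by
            refine Finset.sum_congr rfl (fun q hq => ?_)
            rw [hG]
            simp only [AddMonoidHom.coe_comp, Function.comp_apply,
              AddEquiv.toAddMonoidHom_eq_coe, AddMonoidHom.coe_coe]
            rw [D2_D2 d t q (a - i) i (b - (i - (t - q))) (i - (t - q))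
              (c' - (i - (t - q) - q)) (i - (t - q) - q) (by omega) rfl (by omega) (by omega)
              (by omega) (by omega) y]
            rw [of_congr (C := C) c' (show i - (t - q) - q = i - t by omega) (by omega)]
            rw [castC_castC, castC_castC]
        _ = 0 := by
            rw [← map_sum, key, map_zero]
    -- reindexing
    calc ∑ j ∈ Finset.Icc (0:ℤ) m, ∑ q ∈ Finset.Icc (0:ℤ) m, G j q
        = ∑ j ∈ Finset.Icc (0:ℤ) m, ∑ q ∈ Finset.Icc (0:ℤ) (2*m), G j q := by
          refine Finset.sum_congr rfl (fun j hj => ?_)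
          refine Finset.sum_subset (Finset.Icc_subset_Icc le_rfl (by omega)) ?_
          intro q hq hnq
          simp only [Finset.mem_Icc] at hq hnq
          exact hGz j q (by omega)
      _ = ∑ j ∈ Finset.Icc (0:ℤ) (2*m), ∑ q ∈ Finset.Icc (0:ℤ) (2*m), G j q := by
          refine Finset.sum_subset (Finset.Icc_subset_Icc le_rfl (by omega)) ?_
          intro j hj hnj
          simp only [Finset.mem_Icc] at hj hnj
          exact Finset.sum_eq_zero (fun q hq => hGz j q (by omega))
      _ = ∑ q ∈ Finset.Icc (0:ℤ) (2*m), ∑ j ∈ Finset.Icc (0:ℤ) (2*m), G j q :=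
          Finset.sum_comm
      _ = ∑ q ∈ Finset.Icc (0:ℤ) (2*m), ∑ t ∈ Finset.Icc (0:ℤ) (4*m), G (t - q) q := by
          refine Finset.sum_congr rfl (fun q hq => ?_)
          simp only [Finset.mem_Icc] at hq
          rw [show ∑ j ∈ Finset.Icc (0:ℤ) (2*m), G j q
              = ∑ t ∈ Finset.Icc q (2*m + q), G (t - q) q from
            Finset.sum_bij' (fun j _ => j + q) (fun t _ => t - q)
              (fun a ha => by simp only [Finset.mem_Icc] at ha ⊢; omega)
              (fun a ha => by simp only [Finset.mem_Icc] at ha ⊢; omega)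
              (fun j hj => by ring) (fun t ht => by ring)
              (fun j hj => by rw [show j + q - q = j by ring])]
          refine Finset.sum_subset ?_ ?_
          · intro t ht; simp only [Finset.mem_Icc] at *; omega
          · intro t ht hnt
            simp only [Finset.mem_Icc] at ht hnt
            exact hGz (t - q) q (by omega)
      _ = ∑ t ∈ Finset.Icc (0:ℤ) (4*m), ∑ q ∈ Finset.Icc (0:ℤ) (2*m), G (t - q) q :=
          Finset.sum_comm
      _ = 0 := by
          refine Finset.sum_eq_zero (fun t ht => ?_)
          simp only [Finset.mem_Icc] at ht
          rcases le_or_gt t (2*m) with hle | hlt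
          · rw [← hdiag t]
            refine (Finset.sum_subset (Finset.Icc_subset_Icc le_rfl hle) ?_).symm
            intro q hq hnq
            simp only [Finset.mem_Icc] at hq hnq
            exact hGz (t - q) q (by omega)
          · rw [← hdiag t]
            refine Finset.sum_subset (Finset.Icc_subset_Icc le_rfl (by omega)) ?_
            intro q hq hnq
            simp only [Finset.mem_Icc] at hq hnq
            exact hGz (t - q) q (by omega)
  | add x y hx hy => simp [map_add, hx, hy]

/-- endomorphism `h ∘ B` (row-raising). -/
noncomputable def Nend (a v : ℤ) (hv : v = a - 1) : AddMonoid.End (TotalCB C a) :=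
  ((Hop d hd0 v a (by omega)).comp (Bop d m a v hv) : TotalCB C a →+ TotalCB C a)

/-- endomorphism `B ∘ h` (column-lowering). -/
noncomputable def Mend (a u : ℤ) (hu : u = a + 1) : AddMonoid.End (TotalCB C a) :=
  ((Bop d m u a (by omega)).comp (Hop d hd0 a u hu) : TotalCB C a →+ TotalCB C a)

/-- elements vanishing in rows `< s`. -/
def rowS (a s : ℤ) : AddSubgroup (TotalCB C a) where
  carrier := {x | ∀ i : ℤ, a - i < s → x i = 0}
  add_mem' := by
    intro x y hx hy i hi
    rw [DirectSum.add_apply, hx i hi, hy i hi, add_zero]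
  zero_mem' := by intro i hi; rfl
  neg_mem' := by
    intro x hx i hi
    have : (-x) i = -(x i) := rfl
    rw [this, hx i hi, neg_zero]

/-- elements vanishing in columns `> s`. -/
def colU (a s : ℤ) : AddSubgroup (TotalCB C a) where
  carrier := {x | ∀ i : ℤ, s < i → x i = 0}
  add_mem' := by
    intro x y hx hy i hi
    rw [DirectSum.add_apply, hx i hi, hy i hi, add_zero]
  zero_mem' := by intro i hi; rfl
  neg_mem' := by
    intro x hx i hi
    have : (-x) i = -(x i) := rfl
    rw [this, hx i hi, neg_zero]

theorem of_mem_rowS (a s : ℤ) (i : ℤ) (y : C (a - i) i) (hy : a - i < s → y = 0) :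
    DirectSum.of (CBf (C := C) a) i y ∈ rowS (C := C) a s := by
  intro i' hi'
  rcases eq_or_ne i i' with rfl | hne
  · rw [DirectSum.of_eq_same, hy hi']
  · exact DirectSum.of_eq_of_ne _ _ _ hne.symm

theorem of_mem_colU (a s : ℤ) (i : ℤ) (y : C (a - i) i) (hy : s < i → y = 0) :
    DirectSum.of (CBf (C := C) a) i y ∈ colU (C := C) a s := by
  intro i' hi'
  rcases eq_or_ne i i' with rfl | hne
  · rw [DirectSum.of_eq_same, hy hi']
  · exact DirectSum.of_eq_of_ne _ _ _ hne.symm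

theorem mem_rowS_zero (htriv : ∀ p i : ℤ, (p < 0 ∨ i < 0 ∨ m < i) → Subsingleton (C p i))
    (a : ℤ) (x : TotalCB C a) : x ∈ rowS (C := C) a 0 := by
  intro i hi
  haveI := htriv (a - i) i (Or.inl hi)
  exact Subsingleton.elim _ _

theorem mem_colU_m (htriv : ∀ p i : ℤ, (p < 0 ∨ i < 0 ∨ m < i) → Subsingleton (C p i))
    (a : ℤ) (x : TotalCB C a) : x ∈ colU (C := C) a m := by
  intro i hi
  haveI := htriv (a - i) i (Or.inr (Or.inr hi))
  exact Subsingleton.elim _ _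

theorem rowS_bot (htriv : ∀ p i : ℤ, (p < 0 ∨ i < 0 ∨ m < i) → Subsingleton (C p i))
    (a s : ℤ) (hs : a < s) (x : TotalCB C a) (hx : x ∈ rowS (C := C) a s) : x = 0 := by
  refine DFinsupp.ext (fun i => ?_)
  rcases lt_or_ge (a - i) s with hi | hi
  · exact hx i hi
  · haveI := htriv (a - i) i (Or.inr (Or.inl (by omega)))
    exact Subsingleton.elim _ _

theorem colU_bot (htriv : ∀ p i : ℤ, (p < 0 ∨ i < 0 ∨ m < i) → Subsingleton (C p i))
    (a s : ℤ) (hs : s < 0) (x : TotalCB C a) (hx : x ∈ colU (C := C) a s) : x = 0 := by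
  refine DFinsupp.ext (fun i => ?_)
  rcases lt_or_ge s i with hi | hi
  · exact hx i hi
  · haveI := htriv (a - i) i (Or.inr (Or.inl (by omega)))
    exact Subsingleton.elim _ _

theorem Nend_mem_rowS (a v : ℤ) (hv : v = a - 1) (s : ℤ) (x : TotalCB C a)
    (hx : x ∈ rowS (C := C) a s) : Nend d m hd0 a v hv x ∈ rowS (C := C) a (s + 1) := by
  classical
  haveI : ∀ (i : ℤ) (z : C (a - i) i), Decidable (z ≠ 0) := fun _ _ => Classical.dec _
  rw [← DirectSum.sum_support_of (x := x), map_sum]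
  refine AddSubgroup.sum_mem _ (fun i hi => ?_)
  rcases lt_or_ge (a - i) s with hlow | hhigh
  · rw [hx i hlow, map_zero, map_zero]
    exact AddSubgroup.zero_mem _
  · erw [Nend, AddMonoidHom.comp_apply, Bop_of d m a v hv, map_sum]
    refine AddSubgroup.sum_mem _ (fun j hj => ?_)
    have hj1 : 1 ≤ j := (Finset.mem_Icc.mp hj).1
    rw [Hop_of]
    exact of_mem_rowS a (s+1) (i - j) _ (fun hcon => absurd hcon (by omega))

theorem Mend_mem_colU (a u : ℤ) (hu : u = a + 1) (s : ℤ) (x : TotalCB C a)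
    (hx : x ∈ colU (C := C) a s) : Mend d m hd0 a u hu x ∈ colU (C := C) a (s - 1) := by
  classical
  haveI : ∀ (i : ℤ) (z : C (a - i) i), Decidable (z ≠ 0) := fun _ _ => Classical.dec _
  rw [← DirectSum.sum_support_of (x := x), map_sum]
  refine AddSubgroup.sum_mem _ (fun i hi => ?_)
  rcases lt_or_ge s i with hhigh | hlow
  · rw [hx i hhigh, map_zero, map_zero]
    exact AddSubgroup.zero_mem _
  · rw [show ∀ w, Mend d m hd0 a u hu w = Bop d m u a (by omega) (Hop d hd0 a u hu w) from
      fun w => rfl, Hop_of, Bop_of]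
    refine AddSubgroup.sum_mem _ (fun j hj => ?_)
    have hj1 : 1 ≤ j := (Finset.mem_Icc.mp hj).1
    exact of_mem_colU a (s-1) (i - j) _ (fun hcon => absurd hcon (by omega))

theorem Nend_pow_zero (htriv : ∀ p i : ℤ, (p < 0 ∨ i < 0 ∨ m < i) → Subsingleton (C p i))
    (a v : ℤ) (hv : v = a - 1) {n : ℕ} (hn : a < (n : ℤ)) :
    (Nend d m hd0 a v hv) ^ n = 0 := by
  have key : ∀ (n : ℕ) (x : TotalCB C a), ((Nend d m hd0 a v hv) ^ n) x ∈ rowS (C := C) a n := by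
    intro n
    induction n with
    | zero => intro x; simpa using mem_rowS_zero m htriv a x
    | succ n ih =>
      intro x
      rw [pow_succ']
      have h1 := Nend_mem_rowS d m hd0 a v hv n (((Nend d m hd0 a v hv) ^ n) x) (ih x)
      have h2 : ((Nend d m hd0 a v hv * Nend d m hd0 a v hv ^ n) x)
          = (Nend d m hd0 a v hv) (((Nend d m hd0 a v hv) ^ n) x) := rfl
      rw [h2]
      simpa using h1
  refine AddMonoidHom.ext (fun x => ?_)
  exact (rowS_bot m htriv a n hn _ (key n x)).trans (AddMonoid.End.zero_apply x).symm

theorem Mend_pow_zero (htriv : ∀ p i : ℤ, (p < 0 ∨ i < 0 ∨ m < i) → Subsingleton (C p i))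
    (a u : ℤ) (hu : u = a + 1) {n : ℕ} (hn : m < (n : ℤ)) :
    (Mend d m hd0 a u hu) ^ n = 0 := by
  have key : ∀ (n : ℕ) (x : TotalCB C a),
      ((Mend d m hd0 a u hu) ^ n) x ∈ colU (C := C) a (m - n) := by
    intro n
    induction n with
    | zero => intro x; simpa using mem_colU_m m htriv a x
    | succ n ih =>
      intro x
      rw [pow_succ']
      have h1 := Mend_mem_colU d m hd0 a u hu (m - n) (((Mend d m hd0 a u hu) ^ n) x) (ih x)
      have h2 : ((Mend d m hd0 a u hu * Mend d m hd0 a u hu ^ n) x)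
          = (Mend d m hd0 a u hu) (((Mend d m hd0 a u hu) ^ n) x) := rfl
      rw [h2]
      have h3 : m - (n:ℤ) - 1 = m - ((n:ℕ) + 1 : ℕ) := by push_cast; ring
      rw [h3] at h1
      exact h1
  refine AddMonoidHom.ext (fun x => ?_)
  exact (colU_bot m htriv a (m - n) (by omega) _ (key n x)).trans (AddMonoid.End.zero_apply x).symm


noncomputable def invN (a v : ℤ) (hv : v = a - 1) : AddMonoid.End (TotalCB C a) :=
  ∑ n ∈ Finset.range (a.toNat + 1), (-(Nend d m hd0 a v hv))^n

noncomputable def invM (a u : ℤ) (hu : u = a + 1) : AddMonoid.End (TotalCB C a) :=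
  ∑ n ∈ Finset.range (m.toNat + 1), (-(Mend d m hd0 a u hu))^n

section geom

theorem geom_inv_left {R : Type*} [Ring R] (x : R) (n : ℕ) (hx : x ^ n = 0) :
    (1 - x) * (∑ i ∈ Finset.range n, x ^ i) = 1 := by
  have := mul_geom_sum x n
  rw [hx] at this
  have h2 : (1 - x) = -(x - 1) := (neg_sub x 1).symm
  rw [h2, neg_mul, this]
  simp

theorem geom_inv_right {R : Type*} [Ring R] (x : R) (n : ℕ) (hx : x ^ n = 0) :
    (∑ i ∈ Finset.range n, x ^ i) * (1 - x) = 1 := by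
  have := geom_sum_mul x n
  rw [hx] at this
  have h2 : (1 - x) = -(x - 1) := (neg_sub x 1).symm
  rw [h2, mul_neg, this]
  simp

end geom

section invspec
variable (htriv : ∀ p i : ℤ, (p < 0 ∨ i < 0 ∨ m < i) → Subsingleton (C p i))
include htriv

theorem negN_pow (a v : ℤ) (hv : v = a - 1) :
    (-(Nend d m hd0 a v hv)) ^ (a.toNat + 1) = 0 := by
  rw [neg_pow, Nend_pow_zero d m hd0 htriv a v hv
    (by have := Int.self_le_toNat a; push_cast; omega), mul_zero]

theorem negM_pow (a u : ℤ) (hu : u = a + 1) :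
    (-(Mend d m hd0 a u hu)) ^ (m.toNat + 1) = 0 := by
  rw [neg_pow, Mend_pow_zero d m hd0 htriv a u hu
    (by have := Int.self_le_toNat m; push_cast; omega), mul_zero]

theorem invN_right (a v : ℤ) (hv : v = a - 1) (y : TotalCB C a) :
    invN d m hd0 a v hv y + Nend d m hd0 a v hv (invN d m hd0 a v hv y) = y := by
  have h1 : (1 + Nend d m hd0 a v hv) * invN d m hd0 a v hv = 1 := by
    have := geom_inv_left (-(Nend d m hd0 a v hv)) (a.toNat + 1)
      (negN_pow d m hd0 htriv a v hv)
    rw [sub_neg_eq_add] at this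
    exact this
  exact congrArg (fun f : AddMonoid.End (TotalCB C a) => f y) h1

theorem invN_left (a v : ℤ) (hv : v = a - 1) (y : TotalCB C a) :
    invN d m hd0 a v hv (y + Nend d m hd0 a v hv y) = y := by
  have h1 : invN d m hd0 a v hv * (1 + Nend d m hd0 a v hv) = 1 := by
    have := geom_inv_right (-(Nend d m hd0 a v hv)) (a.toNat + 1)
      (negN_pow d m hd0 htriv a v hv)
    rw [sub_neg_eq_add] at this
    exact this
  exact congrArg (fun f : AddMonoid.End (TotalCB C a) => f y) h1

theorem invM_right (a u : ℤ) (hu : u = a + 1) (y : TotalCB C a) :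
    invM d m hd0 a u hu y + Mend d m hd0 a u hu (invM d m hd0 a u hu y) = y := by
  have h1 : (1 + Mend d m hd0 a u hu) * invM d m hd0 a u hu = 1 := by
    have := geom_inv_left (-(Mend d m hd0 a u hu)) (m.toNat + 1)
      (negM_pow d m hd0 htriv a u hu)
    rw [sub_neg_eq_add] at this
    exact this
  exact congrArg (fun f : AddMonoid.End (TotalCB C a) => f y) h1

theorem invM_left (a u : ℤ) (hu : u = a + 1) (y : TotalCB C a) :
    invM d m hd0 a u hu (y + Mend d m hd0 a u hu y) = y := by
  have h1 : invM d m hd0 a u hu * (1 + Mend d m hd0 a u hu) = 1 := by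
    have := geom_inv_right (-(Mend d m hd0 a u hu)) (m.toNat + 1)
      (negM_pow d m hd0 htriv a u hu)
    rw [sub_neg_eq_add] at this
    exact this
  exact congrArg (fun f : AddMonoid.End (TotalCB C a) => f y) h1

theorem one_add_M_inj (a u : ℤ) (hu : u = a + 1) {y z : TotalCB C a}
    (h : y + Mend d m hd0 a u hu y = z + Mend d m hd0 a u hu z) : y = z := by
  have h1 := invM_left d m hd0 htriv a u hu y
  have h2 := invM_left d m hd0 htriv a u hu z
  rw [← h1, ← h2, h]

theorem one_add_N_inj (a v : ℤ) (hv : v = a - 1) {y z : TotalCB C a}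
    (h : y + Nend d m hd0 a v hv y = z + Nend d m hd0 a v hv z) : y = z := by
  have h1 := invN_left d m hd0 htriv a v hv y
  have h2 := invN_left d m hd0 htriv a v hv z
  rw [← h1, ← h2, h]

theorem invM_Bop (a v : ℤ) (hv : v = a - 1) (ha : a = v + 1) (z : TotalCB C a) :
    invM d m hd0 v a ha (Bop d m a v hv z) =
      Bop d m a v hv (invN d m hd0 a v hv z) := by
  have hMB : ∀ n : ℕ, ((-(Mend d m hd0 v a ha)) ^ n) (Bop d m a v hv z) =
      Bop d m a v hv (((-(Nend d m hd0 a v hv)) ^ n) z) := by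
    intro n
    induction n with
    | zero => simp
    | succ n ih =>
      rw [pow_succ', pow_succ']
      have e1 : ((-(Mend d m hd0 v a ha)) * (-(Mend d m hd0 v a ha)) ^ n)
            (Bop d m a v hv z)
          = (-(Mend d m hd0 v a ha)) (((-(Mend d m hd0 v a ha)) ^ n)
              (Bop d m a v hv z)) := rfl
      have e2 : ((-(Nend d m hd0 a v hv)) * (-(Nend d m hd0 a v hv)) ^ n) z
          = (-(Nend d m hd0 a v hv)) (((-(Nend d m hd0 a v hv)) ^ n) z) := rfl
      rw [e1, e2, ih]
      -- (-M) (B w) = B ((-N) w)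
      have e3 : ∀ w : TotalCB C a, (Mend d m hd0 v a ha) (Bop d m a v hv w)
          = Bop d m a v hv (Nend d m hd0 a v hv w) := fun w => rfl
      have e4 : ∀ w : TotalCB C a, (-(Mend d m hd0 v a ha)) (Bop d m a v hv w)
          = Bop d m a v hv ((-(Nend d m hd0 a v hv)) w) := by
        intro w
        have : (-(Mend d m hd0 v a ha)) (Bop d m a v hv w)
            = -((Mend d m hd0 v a ha) (Bop d m a v hv w)) := rfl
        rw [this, e3, ← map_neg]
        rfl
      exact e4 _
  set K := max (m.toNat + 1) (a.toNat + 1) with hK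
  have hL : invM d m hd0 v a ha (Bop d m a v hv z)
      = ∑ n ∈ Finset.range K, ((-(Mend d m hd0 v a ha)) ^ n) (Bop d m a v hv z) := by
    erw [invM, AddMonoidHom.finset_sum_apply]
    refine Finset.sum_subset (Finset.range_subset_range.mpr (le_max_left _ _)) ?_
    intro n hn hnn
    simp only [Finset.mem_range, not_lt] at hnn
    rw [show n = (n - (m.toNat + 1)) + (m.toNat + 1) by omega, pow_add,
      negM_pow d m hd0 htriv v a ha, mul_zero]
    exact AddMonoid.End.zero_apply _
  have hR : Bop d m a v hv (invN d m hd0 a v hv z)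
      = ∑ n ∈ Finset.range K, Bop d m a v hv (((-(Nend d m hd0 a v hv)) ^ n) z) := by
    erw [invN, AddMonoidHom.finset_sum_apply, map_sum]
    refine Finset.sum_subset (Finset.range_subset_range.mpr (le_max_right _ _)) ?_
    intro n hn hnn
    simp only [Finset.mem_range, not_lt] at hnn
    rw [show n = (n - (a.toNat + 1)) + (a.toNat + 1) by omega, pow_add,
      negN_pow d m hd0 htriv a v hv, mul_zero]
    exact map_zero (Bop d m a v hv)
  rw [hL, hR]
  exact Finset.sum_congr rfl (fun n _ => hMB n)

end invspec

theorem Nend_irrel (a v1 v2 : ℤ) (hv1 : v1 = a - 1) (hv2 : v2 = a - 1) :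
    Nend d m hd0 a v1 hv1 = Nend d m hd0 a v2 hv2 := by
  obtain rfl : v1 = v2 := by omega
  rfl

theorem invN_irrel (a v1 v2 : ℤ) (hv1 : v1 = a - 1) (hv2 : v2 = a - 1) :
    invN d m hd0 a v1 hv1 = invN d m hd0 a v2 hv2 := by
  obtain rfl : v1 = v2 := by omega
  rfl

theorem Mend_irrel (a u1 u2 : ℤ) (hu1 : u1 = a + 1) (hu2 : u2 = a + 1) :
    Mend d m hd0 a u1 hu1 = Mend d m hd0 a u2 hu2 := by
  obtain rfl : u1 = u2 := by omega
  rfl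

theorem invM_irrel (a u1 u2 : ℤ) (hu1 : u1 = a + 1) (hu2 : u2 = a + 1) :
    invM d m hd0 a u1 hu1 = invM d m hd0 a u2 hu2 := by
  obtain rfl : u1 = u2 := by omega
  rfl

section main
variable (hm : 0 ≤ m)
  (htriv : ∀ p i : ℤ, (p < 0 ∨ i < 0 ∨ m < i) → Subsingleton (C p i))
  (hrange : ∀ j p i : ℤ, (j < 0 ∨ m < j) → d j p i = 0)
  (hrel : ∀ (j p i : ℤ) (x : C p i),
      ∑ q ∈ Finset.Icc (0 : ℤ) j,
        castC (C := C) (by ring) (by ring)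
          (d q (p + (j - q) - 1) (i - (j - q)) (d (j - q) p i x)) =
        (0 : C (p + j - 2) (i - j)))

include hm htriv hrange hrel in
/-- `Φ` is a chain map. -/
theorem chain_Phi (a b v v' : ℤ) (h : b = a - 1) (hv : v = a - 1) (hv' : v' = b - 1)
    (c : C 0 a) :
    Dop d m a b h (invN d m hd0 a v hv (iOp a c)) =
      invN d m hd0 b v' hv' (iOp b (mB d a b h c)) := by
  subst h hv hv'
  refine one_add_N_inj d m hd0 htriv (a-1) (a-1-1) rfl ?_
  rw [invN_right d m hd0 htriv (a-1) (a-1-1) rfl]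
  set x := invN d m hd0 a (a-1) rfl (iOp a c) with hxdef
  have hxspec : x + Nend d m hd0 a (a-1) rfl x = iOp a c :=
    invN_right d m hd0 htriv a (a-1) rfl (iOp a c)
  have hxe : x = iOp a c - Hop d hd0 (a-1) a (by omega) (Bop d m a (a-1) rfl x) :=
    eq_sub_of_add_eq hxspec
  have hD : Dop d m a (a-1) rfl x
      = Aop d a (a-1) rfl x + Bop d m a (a-1) rfl x := Dop_eq d m hm a (a-1) rfl x
  have hDD : Dop d m (a-1) (a-1-1) rfl (Dop d m a (a-1) rfl x) = 0 :=
    Dop_Dop d m hm hrange hrel a (a-1) (a-1-1) rfl rfl x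
  have hA2D : Aop d (a-1) (a-1-1) rfl (Dop d m a (a-1) rfl x)
      = Aop d (a-1) (a-1-1) rfl (Bop d m a (a-1) rfl x) := by
    rw [hD, map_add, Aop_Aop d hrel a (a-1) (a-1-1) rfl rfl x, zero_add]
  have hND2 : Nend d m hd0 (a-1) (a-1-1) rfl (Dop d m a (a-1) rfl x)
      = - Hop d hd0 (a-1-1) (a-1) (by omega)
          (Aop d (a-1) (a-1-1) rfl (Bop d m a (a-1) rfl x)) := by
    have e1 : Nend d m hd0 (a-1) (a-1-1) rfl (Dop d m a (a-1) rfl x)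
        = Hop d hd0 (a-1-1) (a-1) (by omega)
            (Bop d m (a-1) (a-1-1) rfl (Dop d m a (a-1) rfl x)) := rfl
    have e2 : Bop d m (a-1) (a-1-1) rfl (Dop d m a (a-1) rfl x)
        = Dop d m (a-1) (a-1-1) rfl (Dop d m a (a-1) rfl x)
          - Aop d (a-1) (a-1-1) rfl (Dop d m a (a-1) rfl x) := by
      rw [Dop_eq d m hm (a-1) (a-1-1) rfl]; abel
    rw [e1, e2, hDD, hA2D, zero_sub, map_neg]
  have h4 := homotopy_id d m hd0 htriv (a-1) a (a-1-1) (by omega) (by omega)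
    (Bop d m a (a-1) rfl x)
  have hAx : Aop d a (a-1) rfl x
      = -(Bop d m a (a-1) rfl x)
        + iOp (a-1) (pOp (a-1) (Bop d m a (a-1) rfl x))
        + Hop d hd0 (a-1-1) (a-1) (by omega)
            (Aop d (a-1) (a-1-1) rfl (Bop d m a (a-1) rfl x)) := by
    calc Aop d a (a-1) rfl x
        = Aop d a (a-1) rfl (iOp a c)
          - Aop d a (a-1) rfl (Hop d hd0 (a-1) a (by omega)
              (Bop d m a (a-1) rfl x)) := by rw [← map_sub, ← hxe]
      _ = - Aop d a (a-1) rfl (Hop d hd0 (a-1) a (by omega)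
              (Bop d m a (a-1) rfl x)) := by
          rw [Aop_iOp d hd0 a (a-1) rfl c, zero_sub]
      _ = Hop d hd0 (a-1-1) (a-1) (by omega)
            (Aop d (a-1) (a-1-1) rfl (Bop d m a (a-1) rfl x))
          - (Bop d m a (a-1) rfl x
            - iOp (a-1) (pOp (a-1) (Bop d m a (a-1) rfl x))) := by
          rw [← h4]; abel
      _ = _ := by abel
  have hpB : pOp (a-1) (Bop d m a (a-1) rfl x) = mB d a (a-1) rfl c := by
    calc pOp (a-1) (Bop d m a (a-1) rfl x)
        = pOp (a-1) (Bop d m a (a-1) rfl (iOp a c))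
          - pOp (a-1) (Bop d m a (a-1) rfl (Hop d hd0 (a-1) a (by omega)
              (Bop d m a (a-1) rfl x))) := by
          rw [← map_sub, ← map_sub, ← hxe]
      _ = mB d a (a-1) rfl c := by
          rw [pOp_Bop_iOp d m hm hrange a (a-1) rfl c,
            pOp_Bop_Hop d m hd0 (a-1) a (by omega) rfl, sub_zero]
  rw [hND2, hD, hAx, hpB]
  abel

include htriv in
/-- `Ψ ∘ Φ = id`. -/
theorem Psi_Phi (a v u : ℤ) (hv : v = a - 1) (hu : u = a + 1) (c : C 0 a) :
    pOp a (invM d m hd0 a u hu (invN d m hd0 a v hv (iOp a c))) = c := by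
  subst hv hu
  set x := invN d m hd0 a (a-1) rfl (iOp a c) with hxdef
  set w := invM d m hd0 a (a+1) rfl x with hwdef
  have hw : w + Mend d m hd0 a (a+1) rfl w = x := invM_right d m hd0 htriv a (a+1) rfl x
  have hx : x + Nend d m hd0 a (a-1) rfl x = iOp a c := invN_right d m hd0 htriv a (a-1) rfl _
  have h1 : pOp a (Mend d m hd0 a (a+1) rfl w) = 0 :=
    pOp_Bop_Hop d m hd0 a (a+1) rfl (by omega) w
  have h2 : pOp a (Nend d m hd0 a (a-1) rfl x) = 0 :=
    pOp_Hop d hd0 (a-1) a (by omega) (Bop d m a (a-1) rfl x)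
  calc pOp a w
      = pOp a (w + Mend d m hd0 a (a+1) rfl w) - pOp a (Mend d m hd0 a (a+1) rfl w) := by
        rw [map_add]; abel
    _ = pOp a x := by rw [hw, h1, sub_zero]
    _ = pOp a (x + Nend d m hd0 a (a-1) rfl x) - pOp a (Nend d m hd0 a (a-1) rfl x) := by
        rw [map_add]; abel
    _ = pOp a (iOp a c) := by rw [hx, h2, sub_zero]
    _ = c := pOp_iOp a c

include hm hrange hrel in
theorem AB_rel (a b c' : ℤ) (h1 : b = a - 1) (h2 : c' = b - 1) (z : TotalCB C a) :
    Aop d b c' h2 (Bop d m a b h1 z) =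
      -(Bop d m b c' h2 (Aop d a b h1 z)) - Bop d m b c' h2 (Bop d m a b h1 z) := by
  have h0 : (Aop d b c' h2 (Aop d a b h1 z) + Bop d m b c' h2 (Aop d a b h1 z))
      + (Aop d b c' h2 (Bop d m a b h1 z) + Bop d m b c' h2 (Bop d m a b h1 z)) = 0 := by
    have hdd := Dop_Dop d m hm hrange hrel a b c' h1 h2 z
    rw [Dop_eq d m hm a b h1 z, map_add, Dop_eq d m hm b c' h2, Dop_eq d m hm b c' h2] at hdd
    exact hdd
  rw [Aop_Aop d hrel a b c' h1 h2 z, zero_add] at h0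
  have h3 : Aop d b c' h2 (Bop d m a b h1 z) + Bop d m b c' h2 (Bop d m a b h1 z)
      = -(Bop d m b c' h2 (Aop d a b h1 z)) := eq_neg_of_add_eq_zero_right h0
  rw [← h3]; abel

include hm htriv hrange hrel in
/-- `Ψ` is a chain map. -/
theorem chain_Psi (a b u u' : ℤ) (h : b = a - 1) (hu : u = a + 1) (hu' : u' = b + 1)
    (y : TotalCB C a) :
    pOp b (invM d m hd0 b u' hu' (Dop d m a b h y)) =
      mB d a b h (pOp a (invM d m hd0 a u hu y)) := by
  subst h hu hu'
  rw [invM_irrel d m hd0 (a-1) (a-1+1) a rfl (by omega)]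
  set w := invM d m hd0 a (a+1) rfl y with hwdef
  have hy : y = w + Bop d m (a+1) a (by omega) (Hop d hd0 a (a+1) rfl w) :=
    (invM_right d m hd0 htriv a (a+1) rfl y).symm
  have h4 := homotopy_id d m hd0 htriv a (a+1) (a-1) rfl rfl w
  -- Dy = Aw + B(P w) + M'(Aw)
  have hDy : Dop d m a (a-1) rfl y
      = (Aop d a (a-1) rfl w
          + Bop d m a (a-1) rfl (Hop d hd0 (a-1) a (by omega) (Aop d a (a-1) rfl w)))
        + Bop d m a (a-1) rfl (iOp a (pOp a w)) := by
    have e1 : Dop d m a (a-1) rfl y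
        = Dop d m a (a-1) rfl w
          + Dop d m a (a-1) rfl (Bop d m (a+1) a (by omega) (Hop d hd0 a (a+1) rfl w)) := by
      conv_lhs => rw [hy]
      rw [map_add]
    have e2 : Bop d m (a+1) a (by omega) (Hop d hd0 a (a+1) rfl w)
        = Dop d m (a+1) a (by omega) (Hop d hd0 a (a+1) rfl w)
          - Aop d (a+1) a (by omega) (Hop d hd0 a (a+1) rfl w) := by
      rw [Dop_eq d m hm (a+1) a (by omega)]; abel
    have e3 : Dop d m a (a-1) rfl
        (Dop d m (a+1) a (by omega) (Hop d hd0 a (a+1) rfl w)) = 0 :=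
      Dop_Dop d m hm hrange hrel (a+1) a (a-1) (by omega) rfl _
    have e4 : Dop d m a (a-1) rfl (Aop d (a+1) a (by omega) (Hop d hd0 a (a+1) rfl w))
        = Bop d m a (a-1) rfl (Aop d (a+1) a (by omega) (Hop d hd0 a (a+1) rfl w)) := by
      rw [Dop_eq d m hm a (a-1) rfl, Aop_Aop d hrel (a+1) a (a-1) (by omega) rfl, zero_add]
    have e5 : Aop d (a+1) a (by omega) (Hop d hd0 a (a+1) rfl w)
        = w - iOp a (pOp a w)
          - Hop d hd0 (a-1) a (by omega) (Aop d a (a-1) rfl w) := by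
      rw [← h4]; abel
    rw [e1, e2, map_sub, e3, e4, e5, zero_sub, Dop_eq d m hm a (a-1) rfl w]
    rw [map_sub, map_sub]
    abel
  -- invM' Dy = Aw + invM' (B (P w))
  have h6 : invM d m hd0 (a-1) a (by omega) (Dop d m a (a-1) rfl y)
      = Aop d a (a-1) rfl w
        + invM d m hd0 (a-1) a (by omega) (Bop d m a (a-1) rfl (iOp a (pOp a w))) := by
    refine one_add_M_inj d m hd0 htriv (a-1) a (by omega) ?_
    rw [invM_right d m hd0 htriv (a-1) a (by omega)]
    have hiv := invM_right d m hd0 htriv (a-1) a (by omega)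
      (Bop d m a (a-1) rfl (iOp a (pOp a w)))
    have eM : Mend d m hd0 (a-1) a (by omega) (Aop d a (a-1) rfl w)
        = Bop d m a (a-1) rfl (Hop d hd0 (a-1) a (by omega) (Aop d a (a-1) rfl w)) := rfl
    rw [hDy, map_add, eM]
    conv_lhs => rw [← hiv]
    abel
  rw [h6, map_add, pOp_Aop d hd0 a (a-1) rfl w, zero_add]
  rw [invM_Bop d m hd0 htriv a (a-1) rfl (by omega) (iOp a (pOp a w))]
  -- now pOp (B (Φ (p w))) = mB (p w)
  set c := pOp a w with hcdef
  set v := invN d m hd0 a (a-1) rfl (iOp a c) with hvdef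
  have hvspec : v = iOp a c - Hop d hd0 (a-1) a (by omega) (Bop d m a (a-1) rfl v) :=
    eq_sub_of_add_eq (invN_right d m hd0 htriv a (a-1) rfl (iOp a c))
  calc pOp (a-1) (Bop d m a (a-1) rfl v)
      = pOp (a-1) (Bop d m a (a-1) rfl (iOp a c))
        - pOp (a-1) (Bop d m a (a-1) rfl (Hop d hd0 (a-1) a (by omega)
            (Bop d m a (a-1) rfl v))) := by
        rw [← map_sub, ← map_sub, ← hvspec]
    _ = mB d a (a-1) rfl c := by
        rw [pOp_Bop_iOp d m hm hrange a (a-1) rfl c,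
          pOp_Bop_Hop d m hd0 (a-1) a (by omega) rfl, sub_zero]

include hm htriv hrange hrel in
/-- homotopy identity for cycles: `x - Φ(Ψ x) = D (h (invM x))`. -/
theorem surj_homotopy (k u : ℤ) (hu : u = k + 1) (x : TotalCB C k)
    (hx : Dop d m k (k-1) rfl x = 0) :
    x - invN d m hd0 k (k-1) rfl (iOp k (pOp k (invM d m hd0 k u hu x)))
      = Dop d m u k (by omega) (Hop d hd0 k u hu (invM d m hd0 k u hu x)) := by
  subst hu
  set w := invM d m hd0 k (k+1) rfl x with hwdef
  set c := pOp k w with hcdef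
  set v := invN d m hd0 k (k-1) rfl (iOp k c) with hvdef
  have hw : w = x - Bop d m (k+1) k (by omega) (Hop d hd0 k (k+1) rfl w) := by
    have h0 := invM_right d m hd0 htriv k (k+1) rfl x
    have eM : Mend d m hd0 k (k+1) rfl (invM d m hd0 k (k+1) rfl x)
        = Bop d m (k+1) k (by omega)
            (Hop d hd0 k (k+1) rfl (invM d m hd0 k (k+1) rfl x)) := rfl
    rw [eM] at h0
    rw [← h0]
    abel
  have hv : v = iOp k c - Hop d hd0 (k-1) k (by omega) (Bop d m k (k-1) rfl v) :=
    eq_sub_of_add_eq (invN_right d m hd0 htriv k (k-1) rfl (iOp k c))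
  have h4 := homotopy_id d m hd0 htriv k (k+1) (k-1) rfl rfl w
  have hAx : Aop d k (k-1) rfl x = -(Bop d m k (k-1) rfl x) := by
    have := Dop_eq d m hm k (k-1) rfl x
    rw [hx] at this
    rw [eq_comm, neg_eq_iff_add_eq_zero, add_comm]
    exact this.symm
  have hBHw : Bop d m (k+1) k (by omega) (Hop d hd0 k (k+1) rfl w) = x - w := by
    conv_rhs => rw [hw]
    abel
  have hA5 : Aop d (k+1) k (by omega) (Hop d hd0 k (k+1) rfl w)
      = w - iOp k c - Hop d hd0 (k-1) k (by omega) (Aop d k (k-1) rfl w) := by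
    rw [← h4]; abel
  have hABH := AB_rel d m hm hrange hrel (k+1) k (k-1) (by omega) rfl
    (Hop d hd0 k (k+1) rfl w)
  have e1 : Aop d k (k-1) rfl w
      = Aop d k (k-1) rfl x
        - Aop d k (k-1) rfl (Bop d m (k+1) k (by omega) (Hop d hd0 k (k+1) rfl w)) := by
    conv_lhs => rw [hw]
    rw [map_sub]
  have hAw : Aop d k (k-1) rfl w
      = -(Bop d m k (k-1) rfl (iOp k c))
        - Bop d m k (k-1) rfl (Hop d hd0 (k-1) k (by omega) (Aop d k (k-1) rfl w)) := by
    conv_lhs => rw [e1]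
    rw [hABH, hAx, hA5, hBHw, map_sub, map_sub, map_sub]
    abel
  have hAw' : Aop d k (k-1) rfl w
      + Bop d m k (k-1) rfl (Hop d hd0 (k-1) k (by omega) (Aop d k (k-1) rfl w))
      = -(Bop d m k (k-1) rfl (iOp k c)) := by
    have := eq_sub_iff_add_eq.mp hAw
    exact this
  have hBv0 : Bop d m k (k-1) rfl v
      = Bop d m k (k-1) rfl (iOp k c)
        - Bop d m k (k-1) rfl (Hop d hd0 (k-1) k (by omega) (Bop d m k (k-1) rfl v)) := by
    conv_lhs => rw [hv]
    rw [map_sub]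
  have hBv' : Bop d m k (k-1) rfl v
      + Bop d m k (k-1) rfl (Hop d hd0 (k-1) k (by omega) (Bop d m k (k-1) rfl v))
      = Bop d m k (k-1) rfl (iOp k c) := eq_sub_iff_add_eq.mp hBv0
  have hclaim : Aop d k (k-1) rfl w = -(Bop d m k (k-1) rfl v) := by
    have hsum : (Aop d k (k-1) rfl w + Bop d m k (k-1) rfl v)
        + Mend d m hd0 (k-1) k (by omega) (Aop d k (k-1) rfl w + Bop d m k (k-1) rfl v)
        = 0 + Mend d m hd0 (k-1) k (by omega) 0 := by
      rw [map_zero, add_zero, map_add]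
      have eM : ∀ z : TotalCB C (k-1), Mend d m hd0 (k-1) k (by omega) z
          = Bop d m k (k-1) rfl (Hop d hd0 (k-1) k (by omega) z) := fun z => rfl
      rw [eM, eM]
      calc Aop d k (k-1) rfl w + Bop d m k (k-1) rfl v
            + (Bop d m k (k-1) rfl (Hop d hd0 (k-1) k (by omega) (Aop d k (k-1) rfl w))
              + Bop d m k (k-1) rfl (Hop d hd0 (k-1) k (by omega) (Bop d m k (k-1) rfl v)))
          = (Aop d k (k-1) rfl w
              + Bop d m k (k-1) rfl (Hop d hd0 (k-1) k (by omega) (Aop d k (k-1) rfl w)))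
            + (Bop d m k (k-1) rfl v
              + Bop d m k (k-1) rfl (Hop d hd0 (k-1) k (by omega)
                  (Bop d m k (k-1) rfl v))) := by abel
        _ = -(Bop d m k (k-1) rfl (iOp k c)) + Bop d m k (k-1) rfl (iOp k c) := by
            rw [hAw', hBv']
        _ = 0 := by abel
    have h7 := one_add_M_inj d m hd0 htriv (k-1) k (by omega) hsum
    rw [eq_comm, neg_eq_iff_add_eq_zero, add_comm]
    exact h7
  rw [Dop_eq d m hm (k+1) k (by omega), hA5, hBHw, hclaim, map_neg]
  conv_lhs => rw [hv]
  abel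

end main

end
end MQI

open MQI

theorem morse_quasi_isomorphic_to_morseBott
    {C : ℤ → ℤ → Type u} [∀ p i, AddCommGroup (C p i)] (m : ℤ) (hm : 0 ≤ m)
    (htriv : ∀ p i : ℤ, (p < 0 ∨ i < 0 ∨ m < i) → Subsingleton (C p i))
    (d : ∀ j p i : ℤ, C p i →+ C (p + j - 1) (i - j))
    (hrange : ∀ j p i : ℤ, (j < 0 ∨ m < j) → d j p i = 0)
    (hrel : ∀ (j p i : ℤ) (x : C p i),
      ∑ q ∈ Finset.Icc (0 : ℤ) j,
        castC (C := C) (by ring) (by ring)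
          (d q (p + (j - q) - 1) (i - (j - q)) (d (j - q) p i x)) =
        (0 : C (p + j - 2) (i - j)))
    (hd0 : ∀ p i : ℤ,
      (0 < p ∧ Even p → Function.Bijective (d 0 p i)) ∧
      (¬(0 < p ∧ Even p) → d 0 p i = 0)) :
    ∀ k : ℤ, Nonempty (morseHomology d k ≃+ totalHomology m d k) := by
  intro k
  classical
  -- the chain map Φ
  set Φhom : C 0 k →+ TotalCB C k :=
    AddMonoidHom.comp (invN d m hd0 k (k-1) rfl : TotalCB C k →+ TotalCB C k) (iOp k)
    with hΦdef
  -- Φ maps kernel to kernel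
  have hker : ∀ x : (morseBoundary d k).ker, Φhom x.val ∈ (totalBoundary m d k).ker := by
    rintro ⟨c, hc⟩
    rw [AddMonoidHom.mem_ker] at hc ⊢
    have hchain := chain_Phi d m hd0 hm htriv hrange hrel k (k-1) (k-1) (k-1-1)
      rfl rfl rfl c
    have hmB : mB d k (k-1) rfl c = 0 := by
      rw [mB, AddMonoidHom.comp_apply, hc, map_zero]
    rw [hmB, map_zero, map_zero] at hchain
    exact hchain
  set f : (morseBoundary d k).ker →+ (totalBoundary m d k).ker :=
    AddMonoidHom.codRestrict (Φhom.comp (morseBoundary d k).ker.subtype)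
      (totalBoundary m d k).ker hker with hfdef
  -- boundary compatibility
  have hbd : ((((castC (C := C) rfl (show k + 1 - 1 = k by ring)).toAddMonoidHom.comp
        (morseBoundary d (k + 1))).range).addSubgroupOf (morseBoundary d k).ker) ≤
      (((((castCB (C := C) (show k + 1 - 1 = k by ring)).toAddMonoidHom.comp
        (totalBoundary m d (k + 1))).range).addSubgroupOf
          (totalBoundary m d k).ker)).comap f := by
    rintro ⟨c, hc⟩ hmem
    rw [AddSubgroup.mem_addSubgroupOf] at hmem
    obtain ⟨e, he⟩ := hmem
    rw [AddSubgroup.mem_comap, AddSubgroup.mem_addSubgroupOf]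
    have he' : mB d (k+1) k (by omega) e = c := he
    have hchain := chain_Phi d m hd0 hm htriv hrange hrel (k+1) k k (k-1)
      (by omega) (by omega) rfl e
    refine ⟨invN d m hd0 (k+1) k (by omega) (iOp (k+1) e), ?_⟩
    show Dop d m (k+1) k (by omega) (invN d m hd0 (k+1) k (by omega) (iOp (k+1) e)) = Φhom c
    rw [hchain, he']
    rfl
  set θ := QuotientAddGroup.map _ _ f hbd with hθdef
  -- injectivity
  have hinj : Function.Injective θ := by
    rw [injective_iff_map_eq_zero]
    intro q hq
    induction q using QuotientAddGroup.induction_on with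
    | H xk =>
      obtain ⟨c, hc⟩ := xk
      rw [hθdef, QuotientAddGroup.map_mk, QuotientAddGroup.eq_zero_iff,
        AddSubgroup.mem_addSubgroupOf] at hq
      obtain ⟨y, hy⟩ := hq
      have hy' : Dop d m (k+1) k (by omega) y = Φhom c := hy
      rw [QuotientAddGroup.eq_zero_iff, AddSubgroup.mem_addSubgroupOf]
      have hPsiPhi := Psi_Phi d m hd0 htriv k (k-1) (k+1) rfl rfl c
      have hchain := chain_Psi d m hd0 hm htriv hrange hrel (k+1) k (k+2) (k+1)
        (by omega) (by omega) (by omega) y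
      refine ⟨pOp (k+1) (invM d m hd0 (k+1) (k+2) (by omega) y), ?_⟩
      show mB d (k+1) k (by omega) (pOp (k+1) (invM d m hd0 (k+1) (k+2) (by omega) y)) = c
      rw [← hchain, hy']
      exact hPsiPhi
  -- surjectivity
  have hsurj : Function.Surjective θ := by
    intro q
    induction q using QuotientAddGroup.induction_on with
    | H xk =>
      obtain ⟨x, hx⟩ := xk
      rw [AddMonoidHom.mem_ker] at hx
      have hxD : Dop d m k (k-1) rfl x = 0 := hx
      have hchain := chain_Psi d m hd0 hm htriv hrange hrel k (k-1) (k+1) k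
        rfl rfl (by omega) x
      rw [hxD, map_zero, map_zero] at hchain
      have hc : morseBoundary d k (pOp k (invM d m hd0 k (k+1) rfl x)) = 0 := hchain.symm
      refine ⟨QuotientAddGroup.mk ⟨pOp k (invM d m hd0 k (k+1) rfl x), hc⟩, ?_⟩
      rw [hθdef, QuotientAddGroup.map_mk]
      rw [QuotientAddGroup.eq]
      rw [AddSubgroup.mem_addSubgroupOf]
      have hhom := surj_homotopy d m hd0 hm htriv hrange hrel k (k+1) rfl x hxD
      refine ⟨Hop d hd0 k (k+1) rfl (invM d m hd0 k (k+1) rfl x), ?_⟩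
      show Dop d m (k+1) k (by omega) (Hop d hd0 k (k+1) rfl (invM d m hd0 k (k+1) rfl x))
        = ((-(f ⟨pOp k (invM d m hd0 k (k+1) rfl x), hc⟩) + ⟨x, hx⟩ :
            (totalBoundary m d k).ker) : TotalCB C k)
      rw [← hhom]
      show x - Φhom (pOp k (invM d m hd0 k (k+1) rfl x))
        = -(Φhom (pOp k (invM d m hd0 k (k+1) rfl x))) + x
      abel
  exact ⟨AddEquiv.ofBijective θ ⟨hinj, hsurj⟩⟩
end
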